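/- arXiv:1404.7734 — 5 statements merged into one kernel-verified Lean document; each statement's English description precedes it below -/
import Mathlib

section
/- CAF_sem is a proper subclass of CAF_pref, and for each semantics σ ∈ {pref, sem, stage} one has the proper inclusions CAF_stb ⊊ CAF_σ ⊊ CAF_naive. -/
structure AF where
  A : Finset ℕ
  R : Set (ℕ × ℕ)
  R_sub : ∀ p ∈ R, p.1 ∈ A ∧ p.2 ∈ A

namespace AF

def cf (F : AF) : Set (Set ℕ) :=
  {S | S ⊆ ↑F.A ∧ ∀ a ∈ S, ∀ b ∈ S, (a, b) ∉ F.R}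

def defends (F : AF) (S : Set ℕ) (a : ℕ) : Prop :=
  ∀ b, (b, a) ∈ F.R → ∃ s ∈ S, (s, b) ∈ F.R

def adm (F : AF) : Set (Set ℕ) :=
  {S | S ∈ F.cf ∧ ∀ a ∈ S, F.defends S a}

def rng (F : AF) (S : Set ℕ) : Set ℕ :=
  S ∪ {b | ∃ s ∈ S, (s, b) ∈ F.R}

def naive (F : AF) : Set (Set ℕ) :=
  {S | S ∈ F.cf ∧ ∀ T ∈ F.cf, S ⊆ T → S = T}

def stb (F : AF) : Set (Set ℕ) :=
  {S | S ∈ F.cf ∧ ∀ a ∈ F.A, a ∉ S → ∃ s ∈ S, (s, a) ∈ F.R}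

def pref (F : AF) : Set (Set ℕ) :=
  {S | S ∈ F.adm ∧ ∀ T ∈ F.adm, S ⊆ T → S = T}

def stage (F : AF) : Set (Set ℕ) :=
  {S | S ∈ F.cf ∧ ¬ ∃ T ∈ F.cf, F.rng S ⊂ F.rng T}

def sem (F : AF) : Set (Set ℕ) :=
  {S | S ∈ F.adm ∧ ¬ ∃ T ∈ F.adm, F.rng S ⊂ F.rng T}

end AF

abbrev Semantics := AF → Set (Set ℕ)

def StandardSemantics : Set Semantics :=
  {AF.naive, AF.stb, AF.stage, AF.pref, AF.sem}

def AFCompact (σ : Semantics) (F : AF) : Prop :=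
  ∀ a ∈ F.A, ∃ S ∈ σ F, a ∈ S

def CAF (σ : Semantics) : Set AF := {F | AFCompact σ F}

def ArgS (𝕊 : Set (Set ℕ)) : Set ℕ := ⋃₀ 𝕊

def PairsS (𝕊 : Set (Set ℕ)) : Set (ℕ × ℕ) :=
  {p | ∃ S ∈ 𝕊, p.1 ∈ S ∧ p.2 ∈ S}

def IsExtensionSet (𝕊 : Set (Set ℕ)) : Prop := (ArgS 𝕊).Finite

def AFStep (F : AF) (a b : ℕ) : Prop := (a, b) ∈ F.R ∨ (b, a) ∈ F.R

def AFConnected (F : AF) : Prop :=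
  ∀ a ∈ F.A, ∀ b ∈ F.A, Relation.ReflTransGen (AFStep F) a b

def sameComp (F : AF) (a b : ℕ) : Prop := Relation.ReflTransGen (AFStep F) a b

def comps (F : AF) : Set (Set ℕ) :=
  {K | ∃ a ∈ F.A, K = {b ∈ (↑F.A : Set ℕ) | sameComp F a b}}

def nopairs (𝕊 : Set (Set ℕ)) (a b : ℕ) : Prop :=
  a ∈ ArgS 𝕊 ∧ b ∈ ArgS 𝕊 ∧ (a, b) ∉ PairsS 𝕊

def compsS (𝕊 : Set (Set ℕ)) : Set (Set ℕ) :=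
  {K | ∃ a ∈ ArgS 𝕊, K = {b ∈ ArgS 𝕊 | Relation.ReflTransGen (nopairs 𝕊) a b}}

noncomputable def sigmaMax (σ : Semantics) (n : ℕ) : ℕ :=
  sSup {k | ∃ F : AF, F.A.card = n ∧ (σ F).ncard = k}

noncomputable def sigmaMaxCon (σ : Semantics) (n : ℕ) : ℕ :=
  sSup {k | ∃ F : AF, F.A.card = n ∧ AFConnected F ∧ (σ F).ncard = k}

noncomputable def sigmaMax2 (σ : Semantics) (n : ℕ) : ℕ :=
  sSup ({k | ∃ F : AF, F.A.card = n ∧ (σ F).ncard = k} \ {sigmaMax σ n})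

def cfSet (𝕊 : Set (Set ℕ)) : Set (Set ℕ) :=
  {S | S ⊆ ArgS 𝕊 ∧ ∀ a ∈ S, ∀ b ∈ S, (a, b) ∈ PairsS 𝕊}

def plusSet (𝕊 : Set (Set ℕ)) : Set (Set ℕ) :=
  {S | S ∈ cfSet 𝕊 ∧ ∀ T ∈ cfSet 𝕊, S ⊆ T → S = T}

def minusSet (𝕊 : Set (Set ℕ)) : Set (Set ℕ) := plusSet 𝕊 \ 𝕊

def Sig (σ : Semantics) : Set (Set (Set ℕ)) := {𝕊 | ∃ F : AF, σ F = 𝕊}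

def cSig (σ : Semantics) : Set (Set (Set ℕ)) :=
  {𝕊 | ∃ F : AF, AFCompact σ F ∧ σ F = 𝕊}

def Pcon (σ : Semantics) (n : ℕ) : Set ℕ :=
  {k | ∃ F : AF, AFCompact σ F ∧ AFConnected F ∧ F.A.card = n ∧ (σ F).ncard = k}

open Classical in
noncomputable def restrictAF (F : AF) (K : Set ℕ) : AF where
  A := F.A.filter (fun a => a ∈ K)
  R := {p | p ∈ F.R ∧ p.1 ∈ K ∧ p.2 ∈ K}
  R_sub := fun p hp => by
    have h := F.R_sub p hp.1
    simp only [Finset.mem_filter]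
    exact ⟨⟨h.1, hp.2.1⟩, ⟨h.2, hp.2.2⟩⟩

def IsExclusionMapping (𝕊 : Set (Set ℕ)) (Rm : Set (ℕ × ℕ)) : Prop :=
  ∃ f : Set ℕ → ℕ,
    (∀ S ∈ minusSet 𝕊, f S ∈ ArgS 𝕊 ∧ f S ∉ S) ∧
    Rm = {p | ∃ S ∈ minusSet 𝕊, p.1 ∈ S ∧ p.2 = f S ∧ p ∉ PairsS 𝕊}

def Independent (𝕊 : Set (Set ℕ)) : Prop :=
  ∃ Rm : Set (ℕ × ℕ), IsExclusionMapping 𝕊 Rm ∧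
    (∀ a b, (a, b) ∈ Rm → (b, a) ∈ Rm → a = b) ∧
    ∀ S ∈ 𝕊, ∀ a ∈ ArgS 𝕊 \ S, ∃ s ∈ S, (s, a) ∉ Rm ∪ PairsS 𝕊

def ConflictExplicit (σ : Semantics) (F : AF) : Prop :=
  ∀ a ∈ F.A, ∀ b ∈ F.A, (a, b) ∉ PairsS (σ F) → (a, b) ∈ F.R ∨ (b, a) ∈ F.R

noncomputable def canonicalCF (𝕊 : Set (Set ℕ)) (h : IsExtensionSet 𝕊) : AF where
  A := h.toFinset
  R := {p | p.1 ∈ ArgS 𝕊 ∧ p.2 ∈ ArgS 𝕊 ∧ p ∉ PairsS 𝕊}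
  R_sub := fun p hp => by
    exact ⟨(Set.Finite.mem_toFinset (hs := h)).2 hp.1, (Set.Finite.mem_toFinset (hs := h)).2 hp.2.1⟩
section Helpers
open AF

lemma rng_mono (F : AF) {S T : Set ℕ} (h : S ⊆ T) : F.rng S ⊆ F.rng T := by
  rintro x (hx | ⟨s, hs, hat⟩)
  · exact Or.inl (h hx)
  · exact Or.inr ⟨s, h hs, hat⟩

lemma rng_subset_A (F : AF) {S : Set ℕ} (h : S ⊆ ↑F.A) : F.rng S ⊆ ↑F.A := by
  rintro x (hx | ⟨s, hs, hat⟩)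
  · exact h hx
  · exact (F.R_sub _ hat).2

lemma sem_subset_pref (F : AF) : F.sem ⊆ F.pref := by
  rintro S ⟨hadm, hmax⟩
  refine ⟨hadm, fun T hT hST => ?_⟩
  have h1 : F.rng S ⊆ F.rng T := rng_mono F hST
  have h2 : F.rng S = F.rng T := by
    by_contra hne
    exact hmax ⟨T, hT, h1, fun hle => hne (subset_antisymm h1 hle)⟩
  apply Set.Subset.antisymm hST
  intro t ht
  have : t ∈ F.rng S := h2 ▸ Or.inl ht
  rcases this with h | ⟨s, hsS, hatt⟩
  · exact h
  · exact absurd hatt (hT.1.2 s (hST hsS) t ht)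

lemma stb_subset_adm (F : AF) : F.stb ⊆ F.adm := by
  rintro S ⟨hcf, hatt⟩
  refine ⟨hcf, fun a ha b hba => ?_⟩
  by_cases hb : b ∈ S
  · exact absurd hba (hcf.2 b hb a ha)
  · exact hatt b (F.R_sub _ hba).1 hb

lemma stb_subset_pref (F : AF) : F.stb ⊆ F.pref := by
  intro S hS
  refine ⟨stb_subset_adm F hS, fun T hT hST => ?_⟩
  apply Set.Subset.antisymm hST
  intro t ht
  by_contra htS
  obtain ⟨s, hs, h⟩ := hS.2 t (Finset.mem_coe.1 (hT.1.1 ht)) htS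
  exact hT.1.2 s (hST hs) t ht h

lemma A_subset_rng_stb (F : AF) {S : Set ℕ} (hS : S ∈ F.stb) : ↑F.A ⊆ F.rng S := by
  intro x hx
  by_cases h : x ∈ S
  · exact Or.inl h
  · obtain ⟨s, hs, hat⟩ := hS.2 x (Finset.mem_coe.1 hx) h
    exact Or.inr ⟨s, hs, hat⟩

lemma stb_subset_sem (F : AF) : F.stb ⊆ F.sem := by
  intro S hS
  refine ⟨stb_subset_adm F hS, ?_⟩
  rintro ⟨T, hT, hsub⟩
  exact hsub.2 ((rng_subset_A F hT.1.1).trans (A_subset_rng_stb F hS))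

lemma stb_subset_stage (F : AF) : F.stb ⊆ F.stage := by
  intro S hS
  refine ⟨hS.1, ?_⟩
  rintro ⟨T, hT, hsub⟩
  exact hsub.2 ((rng_subset_A F hT.1).trans (A_subset_rng_stb F hS))

lemma exists_naive_superset (F : AF) {S : Set ℕ} (hS : S ∈ F.cf) :
    ∃ T ∈ F.naive, S ⊆ T := by
  have hfin : {T | T ∈ F.cf ∧ S ⊆ T}.Finite := by
    apply Set.Finite.subset (F.A.finite_toSet.finite_subsets)
    intro T hT; exact hT.1.1
  obtain ⟨T, hT, hmax⟩ := Set.Finite.exists_maximalFor id _ hfin ⟨S, hS, subset_rfl⟩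
  exact ⟨T, ⟨hT.1, fun T' hT' hTT' => subset_antisymm hTT' (hmax ⟨hT', hT.2.trans hTT'⟩ hTT')⟩, hT.2⟩

lemma exists_pref_superset (F : AF) {S : Set ℕ} (hS : S ∈ F.adm) :
    ∃ T ∈ F.pref, S ⊆ T := by
  have hfin : {T | T ∈ F.adm ∧ S ⊆ T}.Finite := by
    apply Set.Finite.subset (F.A.finite_toSet.finite_subsets)
    intro T hT; exact hT.1.1.1
  obtain ⟨T, hT, hmax⟩ := Set.Finite.exists_maximalFor id _ hfin ⟨S, hS, subset_rfl⟩
  exact ⟨T, ⟨hT.1, fun T' hT' hTT' => subset_antisymm hTT' (hmax ⟨hT', hT.2.trans hTT'⟩ hTT')⟩, hT.2⟩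

lemma cf_of_list (F : AF) (L : List (ℕ × ℕ)) (hR : F.R = {p | p ∈ L}) (S : List ℕ)
    (h1 : ∀ a ∈ S, a ∈ F.A) (h2 : ∀ a ∈ S, ∀ b ∈ S, (a, b) ∉ L) :
    {a | a ∈ S} ∈ F.cf := by
  constructor
  · intro a ha; exact Finset.mem_coe.2 (h1 a ha)
  · intro a ha b hb; rw [hR]; exact h2 a ha b hb

lemma adm_of_list (F : AF) (L : List (ℕ × ℕ)) (hR : F.R = {p | p ∈ L}) (S : List ℕ)
    (h1 : ∀ a ∈ S, a ∈ F.A) (h2 : ∀ a ∈ S, ∀ b ∈ S, (a, b) ∉ L)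
    (h3 : ∀ p ∈ L, p.2 ∈ S → ∃ s ∈ S, (s, p.1) ∈ L) :
    {a | a ∈ S} ∈ F.adm := by
  refine ⟨cf_of_list F L hR S h1 h2, fun a ha b hba => ?_⟩
  rw [hR] at hba
  obtain ⟨s, hs, h⟩ := h3 (b, a) hba ha
  exact ⟨s, hs, by rw [hR]; exact h⟩

end Helpers
-- Witness F2: chain 0 -> 1 -> 2 : naive-compact but not pref/sem/stage-compact
def L2 : List (ℕ × ℕ) := [(0,1),(1,2)]

def F2 : AF where
  A := {0,1,2}
  R := {p | p ∈ L2}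
  R_sub := by
    intro p hp
    have hp' : p ∈ L2 := hp
    fin_cases hp' <;> decide

lemma F2_naive_compact : AFCompact AF.naive F2 := by
  intro a ha
  have key : ∀ S : List ℕ, a ∈ S → {x | x ∈ S} ∈ F2.cf → ∃ T ∈ AF.naive F2, a ∈ T := by
    intro S haS hcf
    obtain ⟨T, hT, hsub⟩ := exists_naive_superset F2 hcf
    exact ⟨T, hT, hsub haS⟩
  fin_cases ha
  · exact key [0,2] (by decide) (cf_of_list F2 L2 rfl [0,2] (by decide) (by decide))
  · exact key [1] (by decide) (cf_of_list F2 L2 rfl [1] (by decide) (by decide))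
  · exact key [0,2] (by decide) (cf_of_list F2 L2 rfl [0,2] (by decide) (by decide))

lemma F2_no_adm_one : ∀ S ∈ F2.adm, (1:ℕ) ∉ S := by
  rintro S ⟨hcf, hdef⟩ h1
  obtain ⟨s, hs, hat⟩ := hdef 1 h1 0 (show ((0:ℕ),(1:ℕ)) ∈ L2 by decide)
  have hat' : (s, (0:ℕ)) ∈ L2 := hat
  simp only [L2, List.mem_cons, Prod.mk.injEq, List.not_mem_nil, or_false] at hat'
  omega

lemma F2_not_pref_compact : ¬ AFCompact AF.pref F2 := by
  intro h
  obtain ⟨S, hS, h1⟩ := h 1 (by decide)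
  exact F2_no_adm_one S hS.1 h1

lemma F2_not_sem_compact : ¬ AFCompact AF.sem F2 := by
  intro h
  obtain ⟨S, hS, h1⟩ := h 1 (by decide)
  exact F2_no_adm_one S hS.1 h1

lemma F2_not_stage_compact : ¬ AFCompact AF.stage F2 := by
  intro h
  obtain ⟨S, hS, h1⟩ := h 1 (by decide)
  obtain ⟨⟨hSA, hcf⟩, hmax⟩ := hS
  have h0 : (0:ℕ) ∉ S := fun h0 => hcf 0 h0 1 h1 (show ((0:ℕ),(1:ℕ)) ∈ L2 by decide)
  have h2 : (2:ℕ) ∉ S := fun h2 => hcf 1 h1 2 h2 (show ((1:ℕ),(2:ℕ)) ∈ L2 by decide)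
  have honly : ∀ x ∈ S, x = 1 := by
    intro x hx
    have hxA : x ∈ F2.A := Finset.mem_coe.1 (hSA hx)
    have hx' : x = 0 ∨ x = 1 ∨ x = 2 := by
      simp only [F2, Finset.mem_insert, Finset.mem_singleton] at hxA; tauto
    rcases hx' with rfl | rfl | rfl
    · exact absurd hx h0
    · rfl
    · exact absurd hx h2
  apply hmax
  refine ⟨{x | x ∈ ([0,2] : List ℕ)}, cf_of_list F2 L2 rfl [0,2] (by decide) (by decide), ?_, ?_⟩
  · rintro x (hx | ⟨s, hs, hat⟩)
    · have := honly x hx; subst this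
      exact Or.inr ⟨0, by decide, show ((0:ℕ),(1:ℕ)) ∈ L2 from by decide⟩
    · have := honly s hs; subst this
      have hat' : ((1:ℕ), x) ∈ L2 := hat
      have hx2 : x = 2 := by
        simp only [L2, List.mem_cons, Prod.mk.injEq, List.not_mem_nil, or_false] at hat'; omega
      subst hx2
      exact Or.inl (by decide)
  · intro hle
    have h0r : (0:ℕ) ∈ F2.rng S := hle (Or.inl (by decide))
    rcases h0r with h | ⟨s, hs, hat⟩
    · exact h0 h
    · have := honly s hs; subst this
      have hat' : ((1:ℕ), (0:ℕ)) ∈ L2 := hat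
      simp only [L2, List.mem_cons, Prod.mk.injEq, List.not_mem_nil, or_false] at hat'
      omega
-- Witness F3: 3-cycle 0 -> 1 -> 2 -> 0 : stage-compact but not stb-compact
def L3 : List (ℕ × ℕ) := [(0,1),(1,2),(2,0)]

def F3 : AF where
  A := {0,1,2}
  R := {p | p ∈ L3}
  R_sub := by
    intro p hp
    have hp' : p ∈ L3 := hp
    fin_cases hp' <;> decide

lemma F3_singleton_cf (a : ℕ) (haA : a ∈ F3.A) (hself : (a,a) ∉ L3) :
    ({a} : Set ℕ) ∈ F3.cf := by
  constructor
  · intro x hx; rw [Set.mem_singleton_iff] at hx; subst hx; exact Finset.mem_coe.2 haA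
  · intro x hx y hy
    rw [Set.mem_singleton_iff] at hx hy; subst hx; subst hy; exact hself

lemma F3_singleton : ∀ S ∈ F3.cf, ∀ x ∈ S, ∀ y ∈ S, x = y := by
  rintro S ⟨hSA, hcf⟩ x hx y hy
  have hxA : x ∈ F3.A := Finset.mem_coe.1 (hSA hx)
  have hyA : y ∈ F3.A := Finset.mem_coe.1 (hSA hy)
  have hx' : x = 0 ∨ x = 1 ∨ x = 2 := by
    simp only [F3, Finset.mem_insert, Finset.mem_singleton] at hxA; tauto
  have hy' : y = 0 ∨ y = 1 ∨ y = 2 := by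
    simp only [F3, Finset.mem_insert, Finset.mem_singleton] at hyA; tauto
  rcases hx' with rfl | rfl | rfl <;> rcases hy' with rfl | rfl | rfl <;> first
    | rfl
    | (exact absurd (show ((0:ℕ),(1:ℕ)) ∈ L3 by decide) (hcf 0 hx 1 hy))
    | (exact absurd (show ((0:ℕ),(1:ℕ)) ∈ L3 by decide) (hcf 0 hy 1 hx))
    | (exact absurd (show ((1:ℕ),(2:ℕ)) ∈ L3 by decide) (hcf 1 hx 2 hy))
    | (exact absurd (show ((1:ℕ),(2:ℕ)) ∈ L3 by decide) (hcf 1 hy 2 hx))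
    | (exact absurd (show ((2:ℕ),(0:ℕ)) ∈ L3 by decide) (hcf 2 hx 0 hy))
    | (exact absurd (show ((2:ℕ),(0:ℕ)) ∈ L3 by decide) (hcf 2 hy 0 hx))

lemma F3_rng_mem {T : Set ℕ} (hone : ∀ x ∈ T, ∀ y ∈ T, x = y) {t : ℕ} (ht : t ∈ T)
    {z : ℕ} (hz : z ∈ F3.rng T) : z = t ∨ (t, z) ∈ L3 := by
  rcases hz with h | ⟨s, hs, hat⟩
  · exact Or.inl (hone z h t ht)
  · have : s = t := hone s hs t ht
    subst this
    exact Or.inr hat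

lemma F3_stage_compact : AFCompact AF.stage F3 := by
  intro a ha
  refine ⟨{a}, ⟨F3_singleton_cf a ha ?_, ?_⟩, rfl⟩
  · have ha' : a = 0 ∨ a = 1 ∨ a = 2 := by
      simp only [F3, Finset.mem_insert, Finset.mem_singleton] at ha; tauto
    rcases ha' with rfl | rfl | rfl <;> decide
  rintro ⟨T, hT, hsub⟩
  have hone := F3_singleton T hT
  have haT : a ∈ F3.rng T := hsub.1 (Or.inl rfl)
  obtain ⟨t, htT⟩ : ∃ t, t ∈ T := by
    rcases haT with h | ⟨s, hs, _⟩
    · exact ⟨a, h⟩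
    · exact ⟨s, hs⟩
  have htA : t ∈ F3.A := Finset.mem_coe.1 (hT.1 htT)
  have ht' : t = 0 ∨ t = 1 ∨ t = 2 := by
    simp only [F3, Finset.mem_insert, Finset.mem_singleton] at htA; tauto
  have hcon : ∀ z ∈ F3.rng T, z = t ∨ (t, z) ∈ L3 := fun z hz => F3_rng_mem hone htT hz
  obtain ⟨w, hw, hwna⟩ := Set.not_subset.1 hsub.2
  have hwA : w ∈ F3.A := Finset.mem_coe.1 (rng_subset_A F3 hT.1 hw)
  have hw' : w = 0 ∨ w = 1 ∨ w = 2 := by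
    simp only [F3, Finset.mem_insert, Finset.mem_singleton] at hwA; tauto
  have ha' : a = 0 ∨ a = 1 ∨ a = 2 := by
    simp only [F3, Finset.mem_insert, Finset.mem_singleton] at ha; tauto
  have hwa : w ≠ a := fun h => hwna (h ▸ Or.inl rfl)
  -- all of 0,1,2 are in rng T; derive contradiction via hcon
  have hsucc : ∀ b : ℕ, ((a, b) ∈ L3) → b ∈ F3.rng T :=
    fun b hb => hsub.1 (Or.inr ⟨a, rfl, hb⟩)
  have c0 : (0:ℕ) ∈ F3.rng T → (t = 0 ∨ t = 2) := by
    intro h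
    rcases hcon 0 h with h' | h'
    · omega
    · have h'' : (t, (0:ℕ)) ∈ L3 := h'
      simp only [L3, List.mem_cons, Prod.mk.injEq, List.not_mem_nil, or_false] at h''; omega
  have c1 : (1:ℕ) ∈ F3.rng T → (t = 1 ∨ t = 0) := by
    intro h
    rcases hcon 1 h with h' | h'
    · omega
    · have h'' : (t, (1:ℕ)) ∈ L3 := h'
      simp only [L3, List.mem_cons, Prod.mk.injEq, List.not_mem_nil, or_false] at h''; omega
  have c2 : (2:ℕ) ∈ F3.rng T → (t = 2 ∨ t = 1) := by
    intro h
    rcases hcon 2 h with h' | h'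
    · omega
    · have h'' : (t, (2:ℕ)) ∈ L3 := h'
      simp only [L3, List.mem_cons, Prod.mk.injEq, List.not_mem_nil, or_false] at h''; omega
  rcases ha' with rfl | rfl | rfl
  · -- a = 0, succ = 1, third = 2
    have hws : w ≠ 1 := fun h => hwna (h ▸ Or.inr ⟨0, rfl, show ((0:ℕ),(1:ℕ)) ∈ L3 by decide⟩)
    have hw2 : w = 2 := by omega
    have := c0 haT
    have := c1 (hsucc 1 (by decide))
    have := c2 (hw2 ▸ hw)
    omega
  · have hws : w ≠ 2 := fun h => hwna (h ▸ Or.inr ⟨1, rfl, show ((1:ℕ),(2:ℕ)) ∈ L3 by decide⟩)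
    have hw0 : w = 0 := by omega
    have := c1 haT
    have := c2 (hsucc 2 (by decide))
    have := c0 (hw0 ▸ hw)
    omega
  · have hws : w ≠ 0 := fun h => hwna (h ▸ Or.inr ⟨2, rfl, show ((2:ℕ),(0:ℕ)) ∈ L3 by decide⟩)
    have hw1 : w = 1 := by omega
    have := c2 haT
    have := c0 (hsucc 0 (by decide))
    have := c1 (hw1 ▸ hw)
    omega

lemma F3_not_stb_compact : ¬ AFCompact AF.stb F3 := by
  intro h
  obtain ⟨S, ⟨⟨hSA, hcf⟩, hatt⟩, h0⟩ := h 0 (by decide)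
  have h1 : (1:ℕ) ∉ S := fun h1 => hcf 0 h0 1 h1 (show ((0:ℕ),(1:ℕ)) ∈ L3 by decide)
  obtain ⟨s, hs, hat⟩ := hatt 2 (by decide)
    (fun h2 => hcf 2 h2 0 h0 (show ((2:ℕ),(0:ℕ)) ∈ L3 by decide))
  have hat' : (s, (2:ℕ)) ∈ L3 := hat
  have : s = 1 := by
    simp only [L3, List.mem_cons, Prod.mk.injEq, List.not_mem_nil, or_false] at hat'; omega
  subst this
  exact h1 hs
-- Witness F1: z=0, 3-cycle c=1,2,3, defenders d=4,5,6 with d_i <-> c_i, z <-> d_i.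
-- pref-compact but not sem-compact and not stb-compact.
def L1 : List (ℕ × ℕ) :=
  [(1,2),(2,3),(3,1),
   (1,4),(4,1),(2,5),(5,2),(3,6),(6,3),
   (0,4),(4,0),(0,5),(5,0),(0,6),(6,0)]

def F1 : AF where
  A := {0,1,2,3,4,5,6}
  R := {p | p ∈ L1}
  R_sub := by
    intro p hp
    have hp' : p ∈ L1 := hp
    fin_cases hp' <;> decide

lemma F1_pref_compact : AFCompact AF.pref F1 := by
  intro a ha
  have key : ∀ S : List ℕ, a ∈ S → {x | x ∈ S} ∈ F1.adm → ∃ T ∈ AF.pref F1, a ∈ T := by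
    intro S haS hadm
    obtain ⟨T, hT, hsub⟩ := exists_pref_superset F1 hadm
    exact ⟨T, hT, hsub haS⟩
  fin_cases ha
  · exact key [0] (by decide) (adm_of_list F1 L1 rfl [0] (by decide) (by decide) (by decide))
  · exact key [1,6] (by decide) (adm_of_list F1 L1 rfl [1,6] (by decide) (by decide) (by decide))
  · exact key [2,4] (by decide) (adm_of_list F1 L1 rfl [2,4] (by decide) (by decide) (by decide))
  · exact key [3,5] (by decide) (adm_of_list F1 L1 rfl [3,5] (by decide) (by decide) (by decide))
  · exact key [4] (by decide) (adm_of_list F1 L1 rfl [4] (by decide) (by decide) (by decide))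
  · exact key [5] (by decide) (adm_of_list F1 L1 rfl [5] (by decide) (by decide) (by decide))
  · exact key [6] (by decide) (adm_of_list F1 L1 rfl [6] (by decide) (by decide) (by decide))

lemma F1_not_sem_compact : ¬ AFCompact AF.sem F1 := by
  intro h
  obtain ⟨S, ⟨⟨⟨hSA, hcf⟩, hdef⟩, hmax⟩, h0⟩ := h 0 (by decide)
  have honly : ∀ x ∈ S, x = 0 := by
    intro x hx
    have hxA : x ∈ F1.A := Finset.mem_coe.1 (hSA hx)
    have hx' : x = 0 ∨ x = 1 ∨ x = 2 ∨ x = 3 ∨ x = 4 ∨ x = 5 ∨ x = 6 := by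
      simp only [F1, Finset.mem_insert, Finset.mem_singleton] at hxA; tauto
    rcases hx' with rfl | rfl | rfl | rfl | rfl | rfl | rfl
    · rfl
    · -- 1 ∈ S : attacked by 3, defender attacks 3 : s ∈ {2,6}, both conflict
      obtain ⟨s, hs, hat⟩ := hdef 1 hx 3 (show ((3:ℕ),(1:ℕ)) ∈ L1 from by decide)
      have hat' : (s, (3:ℕ)) ∈ L1 := hat
      have hs' : s = 2 ∨ s = 6 := by
        simp only [L1, List.mem_cons, Prod.mk.injEq, List.not_mem_nil, or_false] at hat'; omega
      rcases hs' with rfl | rfl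
      · exact absurd (show ((1:ℕ),(2:ℕ)) ∈ L1 from by decide) (hcf 1 hx 2 hs)
      · exact absurd (show ((0:ℕ),(6:ℕ)) ∈ L1 from by decide) (hcf 0 h0 6 hs)
    · obtain ⟨s, hs, hat⟩ := hdef 2 hx 1 (show ((1:ℕ),(2:ℕ)) ∈ L1 from by decide)
      have hat' : (s, (1:ℕ)) ∈ L1 := hat
      have hs' : s = 3 ∨ s = 4 := by
        simp only [L1, List.mem_cons, Prod.mk.injEq, List.not_mem_nil, or_false] at hat'; omega
      rcases hs' with rfl | rfl
      · exact absurd (show ((2:ℕ),(3:ℕ)) ∈ L1 from by decide) (hcf 2 hx 3 hs)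
      · exact absurd (show ((0:ℕ),(4:ℕ)) ∈ L1 from by decide) (hcf 0 h0 4 hs)
    · obtain ⟨s, hs, hat⟩ := hdef 3 hx 2 (show ((2:ℕ),(3:ℕ)) ∈ L1 from by decide)
      have hat' : (s, (2:ℕ)) ∈ L1 := hat
      have hs' : s = 1 ∨ s = 5 := by
        simp only [L1, List.mem_cons, Prod.mk.injEq, List.not_mem_nil, or_false] at hat'; omega
      rcases hs' with rfl | rfl
      · exact absurd (show ((3:ℕ),(1:ℕ)) ∈ L1 from by decide) (hcf 3 hx 1 hs)
      · exact absurd (show ((0:ℕ),(5:ℕ)) ∈ L1 from by decide) (hcf 0 h0 5 hs)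
    · exact absurd (show ((0:ℕ),(4:ℕ)) ∈ L1 from by decide) (hcf 0 h0 4 hx)
    · exact absurd (show ((0:ℕ),(5:ℕ)) ∈ L1 from by decide) (hcf 0 h0 5 hx)
    · exact absurd (show ((0:ℕ),(6:ℕ)) ∈ L1 from by decide) (hcf 0 h0 6 hx)
  apply hmax
  refine ⟨{x | x ∈ ([4,5,6] : List ℕ)},
    adm_of_list F1 L1 rfl [4,5,6] (by decide) (by decide) (by decide), ?_, ?_⟩
  · rintro x (hx | ⟨s, hs, hat⟩)
    · have := honly x hx; subst this
      exact Or.inr ⟨4, by decide, show ((4:ℕ),(0:ℕ)) ∈ L1 from by decide⟩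
    · have := honly s hs; subst this
      have hat' : ((0:ℕ), x) ∈ L1 := hat
      have hx' : x = 4 ∨ x = 5 ∨ x = 6 := by
        simp only [L1, List.mem_cons, Prod.mk.injEq, List.not_mem_nil, or_false] at hat'; omega
      refine Or.inl ?_
      rcases hx' with rfl | rfl | rfl <;> decide
  · intro hle
    have h1r : (1:ℕ) ∈ F1.rng S :=
      hle (Or.inr ⟨4, by decide, show ((4:ℕ),(1:ℕ)) ∈ L1 from by decide⟩)
    rcases h1r with hmem | ⟨s, hs, hat⟩
    · have := honly 1 hmem; omega
    · have := honly s hs; subst this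
      have hat' : ((0:ℕ),(1:ℕ)) ∈ L1 := hat
      simp only [L1, List.mem_cons, Prod.mk.injEq, List.not_mem_nil, or_false] at hat'
      omega

lemma F1_not_stb_compact : ¬ AFCompact AF.stb F1 := by
  intro h
  obtain ⟨S, ⟨⟨hSA, hcf⟩, hatt⟩, h0⟩ := h 0 (by decide)
  have hd : ∀ d : ℕ, (0, d) ∈ L1 → d ∉ S := fun d hdL hdS => hcf 0 h0 d hdS hdL
  have h4 : (4:ℕ) ∉ S := hd 4 (by decide)
  have h5 : (5:ℕ) ∉ S := hd 5 (by decide)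
  have h6 : (6:ℕ) ∉ S := hd 6 (by decide)
  have g1 : (1:ℕ) ∈ S ∨ (3:ℕ) ∈ S := by
    by_cases h1 : (1:ℕ) ∈ S
    · exact Or.inl h1
    obtain ⟨s, hs, hat⟩ := hatt 1 (by decide) h1
    have hat' : (s, (1:ℕ)) ∈ L1 := hat
    have : s = 3 ∨ s = 4 := by
      simp only [L1, List.mem_cons, Prod.mk.injEq, List.not_mem_nil, or_false] at hat'; omega
    rcases this with rfl | rfl
    · exact Or.inr hs
    · exact absurd hs h4
  have g2 : (2:ℕ) ∈ S ∨ (1:ℕ) ∈ S := by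
    by_cases h2 : (2:ℕ) ∈ S
    · exact Or.inl h2
    obtain ⟨s, hs, hat⟩ := hatt 2 (by decide) h2
    have hat' : (s, (2:ℕ)) ∈ L1 := hat
    have : s = 1 ∨ s = 5 := by
      simp only [L1, List.mem_cons, Prod.mk.injEq, List.not_mem_nil, or_false] at hat'; omega
    rcases this with rfl | rfl
    · exact Or.inr hs
    · exact absurd hs h5
  have g3 : (3:ℕ) ∈ S ∨ (2:ℕ) ∈ S := by
    by_cases h3 : (3:ℕ) ∈ S
    · exact Or.inl h3
    obtain ⟨s, hs, hat⟩ := hatt 3 (by decide) h3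
    have hat' : (s, (3:ℕ)) ∈ L1 := hat
    have : s = 2 ∨ s = 6 := by
      simp only [L1, List.mem_cons, Prod.mk.injEq, List.not_mem_nil, or_false] at hat'; omega
    rcases this with rfl | rfl
    · exact Or.inr hs
    · exact absurd hs h6
  have c12 : ¬((1:ℕ) ∈ S ∧ (2:ℕ) ∈ S) :=
    fun ⟨a, b⟩ => hcf 1 a 2 b (show ((1:ℕ),(2:ℕ)) ∈ L1 from by decide)
  have c23 : ¬((2:ℕ) ∈ S ∧ (3:ℕ) ∈ S) :=
    fun ⟨a, b⟩ => hcf 2 a 3 b (show ((2:ℕ),(3:ℕ)) ∈ L1 from by decide)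
  have c31 : ¬((3:ℕ) ∈ S ∧ (1:ℕ) ∈ S) :=
    fun ⟨a, b⟩ => hcf 3 a 1 b (show ((3:ℕ),(1:ℕ)) ∈ L1 from by decide)
  tauto
-- Witness Fsem: e-cycle {0,1,2}, g-cycle {3,4,5}, clique {6,...,11} (f=6,7,8 / h=9,10,11),
-- f_i attacks e_{i-1}, h_j attacks g_{j-1}.  sem-compact but no stable extension.
def LS : List (ℕ × ℕ) :=
  [(0,1),(1,2),(2,0),
   (3,4),(4,5),(5,3),
   (6,2),(7,0),(8,1),
   (9,5),(10,3),(11,4),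
   (6,7),(6,8),(6,9),(6,10),(6,11),
   (7,6),(7,8),(7,9),(7,10),(7,11),
   (8,6),(8,7),(8,9),(8,10),(8,11),
   (9,6),(9,7),(9,8),(9,10),(9,11),
   (10,6),(10,7),(10,8),(10,9),(10,11),
   (11,6),(11,7),(11,8),(11,9),(11,10)]

def Fsem : AF where
  A := {0,1,2,3,4,5,6,7,8,9,10,11}
  R := {p | p ∈ LS}
  R_sub := by
    intro p hp
    have hp' : p ∈ LS := hp
    fin_cases hp' <;> decide

def eSide : List ℕ := [0,1,2,6,7,8,9,10,11]
def gSide : List ℕ := [3,4,5,6,7,8,9,10,11]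

lemma Fsem_classify : ∀ T ∈ Fsem.adm,
    Fsem.rng T ⊆ {x | x ∈ eSide} ∨ Fsem.rng T ⊆ {x | x ∈ gSide} := by
  rintro T ⟨⟨hTA, hcf⟩, hdef⟩
  have hmem12 : ∀ x ∈ T, x = 0 ∨ x = 1 ∨ x = 2 ∨ x = 3 ∨ x = 4 ∨ x = 5 ∨
      x = 6 ∨ x = 7 ∨ x = 8 ∨ x = 9 ∨ x = 10 ∨ x = 11 := by
    intro x hx
    have hxA : x ∈ Fsem.A := Finset.mem_coe.1 (hTA hx)
    simp only [Fsem, Finset.mem_insert, Finset.mem_singleton] at hxA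
    tauto
  -- partner implications
  have h06 : (0:ℕ) ∈ T → (6:ℕ) ∈ T := by
    intro h0
    obtain ⟨s, hs, hat⟩ := hdef 0 h0 2 (show ((2:ℕ),(0:ℕ)) ∈ LS from by decide)
    have hat' : (s, (2:ℕ)) ∈ LS := hat
    have hs' : s = 1 ∨ s = 6 := by
      simp only [LS, List.mem_cons, Prod.mk.injEq, List.not_mem_nil, or_false] at hat'; omega
    rcases hs' with rfl | rfl
    · exact absurd (show ((0:ℕ),(1:ℕ)) ∈ LS from by decide) (hcf 0 h0 1 hs)
    · exact hs
  have h17 : (1:ℕ) ∈ T → (7:ℕ) ∈ T := by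
    intro h1
    obtain ⟨s, hs, hat⟩ := hdef 1 h1 0 (show ((0:ℕ),(1:ℕ)) ∈ LS from by decide)
    have hat' : (s, (0:ℕ)) ∈ LS := hat
    have hs' : s = 2 ∨ s = 7 := by
      simp only [LS, List.mem_cons, Prod.mk.injEq, List.not_mem_nil, or_false] at hat'; omega
    rcases hs' with rfl | rfl
    · exact absurd (show ((1:ℕ),(2:ℕ)) ∈ LS from by decide) (hcf 1 h1 2 hs)
    · exact hs
  have h28 : (2:ℕ) ∈ T → (8:ℕ) ∈ T := by
    intro h2
    obtain ⟨s, hs, hat⟩ := hdef 2 h2 1 (show ((1:ℕ),(2:ℕ)) ∈ LS from by decide)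
    have hat' : (s, (1:ℕ)) ∈ LS := hat
    have hs' : s = 0 ∨ s = 8 := by
      simp only [LS, List.mem_cons, Prod.mk.injEq, List.not_mem_nil, or_false] at hat'; omega
    rcases hs' with rfl | rfl
    · exact absurd (show ((2:ℕ),(0:ℕ)) ∈ LS from by decide) (hcf 2 h2 0 hs)
    · exact hs
  have h39 : (3:ℕ) ∈ T → (9:ℕ) ∈ T := by
    intro h3
    obtain ⟨s, hs, hat⟩ := hdef 3 h3 5 (show ((5:ℕ),(3:ℕ)) ∈ LS from by decide)
    have hat' : (s, (5:ℕ)) ∈ LS := hat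
    have hs' : s = 4 ∨ s = 9 := by
      simp only [LS, List.mem_cons, Prod.mk.injEq, List.not_mem_nil, or_false] at hat'; omega
    rcases hs' with rfl | rfl
    · exact absurd (show ((3:ℕ),(4:ℕ)) ∈ LS from by decide) (hcf 3 h3 4 hs)
    · exact hs
  have h410 : (4:ℕ) ∈ T → (10:ℕ) ∈ T := by
    intro h4
    obtain ⟨s, hs, hat⟩ := hdef 4 h4 3 (show ((3:ℕ),(4:ℕ)) ∈ LS from by decide)
    have hat' : (s, (3:ℕ)) ∈ LS := hat
    have hs' : s = 5 ∨ s = 10 := by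
      simp only [LS, List.mem_cons, Prod.mk.injEq, List.not_mem_nil, or_false] at hat'; omega
    rcases hs' with rfl | rfl
    · exact absurd (show ((4:ℕ),(5:ℕ)) ∈ LS from by decide) (hcf 4 h4 5 hs)
    · exact hs
  have h511 : (5:ℕ) ∈ T → (11:ℕ) ∈ T := by
    intro h5
    obtain ⟨s, hs, hat⟩ := hdef 5 h5 4 (show ((4:ℕ),(5:ℕ)) ∈ LS from by decide)
    have hat' : (s, (4:ℕ)) ∈ LS := hat
    have hs' : s = 3 ∨ s = 11 := by
      simp only [LS, List.mem_cons, Prod.mk.injEq, List.not_mem_nil, or_false] at hat'; omega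
    rcases hs' with rfl | rfl
    · exact absurd (show ((5:ℕ),(3:ℕ)) ∈ LS from by decide) (hcf 5 h5 3 hs)
    · exact hs
  have clique_mem : ∀ u ∈ ([6,7,8,9,10,11]:List ℕ), ∀ v ∈ ([6,7,8,9,10,11]:List ℕ),
      u ≠ v → (u, v) ∈ LS := by decide
  by_cases hf : (6:ℕ) ∈ T ∨ (7:ℕ) ∈ T ∨ (8:ℕ) ∈ T
  · -- only {0,1,2,6,7,8} can be in T
    have hnoh : ∀ y : ℕ, y = 9 ∨ y = 10 ∨ y = 11 → y ∉ T := by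
      intro y hy hyT
      rcases hf with h | h | h <;> rcases hy with rfl | rfl | rfl <;>
        exact hcf _ h _ hyT (clique_mem _ (by decide) _ (by decide) (by decide))
    have hTsub : ∀ y ∈ T, y ∈ ([0,1,2,6,7,8] : List ℕ) := by
      intro y hy
      have h12 := hmem12 y hy
      have n3 : y ≠ 3 := fun h => hnoh 9 (by omega) (h39 (h ▸ hy))
      have n4 : y ≠ 4 := fun h => hnoh 10 (by omega) (h410 (h ▸ hy))
      have n5 : y ≠ 5 := fun h => hnoh 11 (by omega) (h511 (h ▸ hy))
      have n9 : y ≠ 9 := fun h => hnoh 9 (by omega) (h ▸ hy)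
      have n10 : y ≠ 10 := fun h => hnoh 10 (by omega) (h ▸ hy)
      have n11 : y ≠ 11 := fun h => hnoh 11 (by omega) (h ▸ hy)
      simp only [List.mem_cons, List.not_mem_nil, or_false]
      omega
    left
    rintro x (hx | ⟨s, hs, hat⟩)
    · have hx' := hTsub x hx
      show x ∈ eSide
      simp only [List.mem_cons, List.not_mem_nil, or_false] at hx' ⊢
      simp only [eSide, List.mem_cons, List.not_mem_nil, or_false]
      omega
    · have htarget : ∀ p ∈ LS, p.1 ∈ ([0,1,2,6,7,8]:List ℕ) → p.2 ∈ eSide := by decide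
      exact htarget (s, x) hat (hTsub s hs)
  · -- only {3,4,5,9,10,11} can be in T
    push_neg at hf
    obtain ⟨n6, n7, n8⟩ := hf
    have hTsub : ∀ y ∈ T, y ∈ ([3,4,5,9,10,11] : List ℕ) := by
      intro y hy
      have h12 := hmem12 y hy
      have n0 : y ≠ 0 := fun h => n6 (h06 (h ▸ hy))
      have n1 : y ≠ 1 := fun h => n7 (h17 (h ▸ hy))
      have n2 : y ≠ 2 := fun h => n8 (h28 (h ▸ hy))
      have n6' : y ≠ 6 := fun h => n6 (h ▸ hy)
      have n7' : y ≠ 7 := fun h => n7 (h ▸ hy)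
      have n8' : y ≠ 8 := fun h => n8 (h ▸ hy)
      simp only [List.mem_cons, List.not_mem_nil, or_false]
      omega
    right
    rintro x (hx | ⟨s, hs, hat⟩)
    · have hx' := hTsub x hx
      show x ∈ gSide
      simp only [List.mem_cons, List.not_mem_nil, or_false] at hx' ⊢
      simp only [gSide, List.mem_cons, List.not_mem_nil, or_false]
      omega
    · have htarget : ∀ p ∈ LS, p.1 ∈ ([3,4,5,9,10,11]:List ℕ) → p.2 ∈ gSide := by decide
      exact htarget (s, x) hat (hTsub s hs)

lemma Fsem_sem_key (S : List ℕ) (X Y : List ℕ) (m w : ℕ) (hm : m ∈ S) (hw : w ∈ S)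
    (hadm : {x | x ∈ S} ∈ Fsem.adm)
    (hclass : ∀ T ∈ Fsem.adm, Fsem.rng T ⊆ {x | x ∈ X} ∨ Fsem.rng T ⊆ {x | x ∈ Y})
    (hcov : ∀ x ∈ X, x ∈ S ∨ ∃ s ∈ S, (s, x) ∈ LS)
    (hwY : w ∉ Y) :
    ∃ E ∈ AF.sem Fsem, m ∈ E := by
  have hXrng : {x | x ∈ X} ⊆ Fsem.rng {x | x ∈ S} := by
    intro x hx
    rcases hcov x hx with h | ⟨s, hs, hat⟩
    · exact Or.inl h
    · exact Or.inr ⟨s, hs, hat⟩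
  refine ⟨{x | x ∈ S}, ⟨hadm, ?_⟩, hm⟩
  rintro ⟨T, hT, hsub⟩
  rcases hclass T hT with hc | hc
  · exact hsub.2 (hc.trans hXrng)
  · exact hwY (hc (hsub.1 (Or.inl hw)))

lemma Fsem_sem_compact : AFCompact AF.sem Fsem := by
  have classE := Fsem_classify
  have classG : ∀ T ∈ Fsem.adm,
      Fsem.rng T ⊆ {x | x ∈ gSide} ∨ Fsem.rng T ⊆ {x | x ∈ eSide} :=
    fun T hT => (Fsem_classify T hT).symm
  intro a ha
  fin_cases ha
  · exact Fsem_sem_key [0,6] eSide gSide 0 0 (by decide) (by decide)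
      (adm_of_list Fsem LS rfl [0,6] (by decide) (by decide) (by decide)) classE
      (by decide) (by decide)
  · exact Fsem_sem_key [1,7] eSide gSide 1 1 (by decide) (by decide)
      (adm_of_list Fsem LS rfl [1,7] (by decide) (by decide) (by decide)) classE
      (by decide) (by decide)
  · exact Fsem_sem_key [2,8] eSide gSide 2 2 (by decide) (by decide)
      (adm_of_list Fsem LS rfl [2,8] (by decide) (by decide) (by decide)) classE
      (by decide) (by decide)
  · exact Fsem_sem_key [3,9] gSide eSide 3 3 (by decide) (by decide)
      (adm_of_list Fsem LS rfl [3,9] (by decide) (by decide) (by decide)) classG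
      (by decide) (by decide)
  · exact Fsem_sem_key [4,10] gSide eSide 4 4 (by decide) (by decide)
      (adm_of_list Fsem LS rfl [4,10] (by decide) (by decide) (by decide)) classG
      (by decide) (by decide)
  · exact Fsem_sem_key [5,11] gSide eSide 5 5 (by decide) (by decide)
      (adm_of_list Fsem LS rfl [5,11] (by decide) (by decide) (by decide)) classG
      (by decide) (by decide)
  · exact Fsem_sem_key [0,6] eSide gSide 6 0 (by decide) (by decide)
      (adm_of_list Fsem LS rfl [0,6] (by decide) (by decide) (by decide)) classE
      (by decide) (by decide)
  · exact Fsem_sem_key [1,7] eSide gSide 7 1 (by decide) (by decide)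
      (adm_of_list Fsem LS rfl [1,7] (by decide) (by decide) (by decide)) classE
      (by decide) (by decide)
  · exact Fsem_sem_key [2,8] eSide gSide 8 2 (by decide) (by decide)
      (adm_of_list Fsem LS rfl [2,8] (by decide) (by decide) (by decide)) classE
      (by decide) (by decide)
  · exact Fsem_sem_key [3,9] gSide eSide 9 3 (by decide) (by decide)
      (adm_of_list Fsem LS rfl [3,9] (by decide) (by decide) (by decide)) classG
      (by decide) (by decide)
  · exact Fsem_sem_key [4,10] gSide eSide 10 4 (by decide) (by decide)
      (adm_of_list Fsem LS rfl [4,10] (by decide) (by decide) (by decide)) classG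
      (by decide) (by decide)
  · exact Fsem_sem_key [5,11] gSide eSide 11 5 (by decide) (by decide)
      (adm_of_list Fsem LS rfl [5,11] (by decide) (by decide) (by decide)) classG
      (by decide) (by decide)

lemma Fsem_not_stb_compact : ¬ AFCompact AF.stb Fsem := by
  intro h
  obtain ⟨S, ⟨⟨hSA, hcf⟩, hatt⟩, h6⟩ := h 6 (by decide)
  have h9 : (9:ℕ) ∉ S := fun hy => hcf 6 h6 9 hy (show ((6:ℕ),(9:ℕ)) ∈ LS from by decide)
  have h10 : (10:ℕ) ∉ S := fun hy => hcf 6 h6 10 hy (show ((6:ℕ),(10:ℕ)) ∈ LS from by decide)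
  have h11 : (11:ℕ) ∉ S := fun hy => hcf 6 h6 11 hy (show ((6:ℕ),(11:ℕ)) ∈ LS from by decide)
  have g1 : (3:ℕ) ∈ S ∨ (5:ℕ) ∈ S := by
    by_cases h3 : (3:ℕ) ∈ S
    · exact Or.inl h3
    obtain ⟨s, hs, hat⟩ := hatt 3 (by decide) h3
    have hat' : (s, (3:ℕ)) ∈ LS := hat
    have : s = 5 ∨ s = 10 := by
      simp only [LS, List.mem_cons, Prod.mk.injEq, List.not_mem_nil, or_false] at hat'; omega
    rcases this with rfl | rfl
    · exact Or.inr hs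
    · exact absurd hs h10
  have g2 : (4:ℕ) ∈ S ∨ (3:ℕ) ∈ S := by
    by_cases h4 : (4:ℕ) ∈ S
    · exact Or.inl h4
    obtain ⟨s, hs, hat⟩ := hatt 4 (by decide) h4
    have hat' : (s, (4:ℕ)) ∈ LS := hat
    have : s = 3 ∨ s = 11 := by
      simp only [LS, List.mem_cons, Prod.mk.injEq, List.not_mem_nil, or_false] at hat'; omega
    rcases this with rfl | rfl
    · exact Or.inr hs
    · exact absurd hs h11
  have g3 : (5:ℕ) ∈ S ∨ (4:ℕ) ∈ S := by
    by_cases h5 : (5:ℕ) ∈ S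
    · exact Or.inl h5
    obtain ⟨s, hs, hat⟩ := hatt 5 (by decide) h5
    have hat' : (s, (5:ℕ)) ∈ LS := hat
    have : s = 4 ∨ s = 9 := by
      simp only [LS, List.mem_cons, Prod.mk.injEq, List.not_mem_nil, or_false] at hat'; omega
    rcases this with rfl | rfl
    · exact Or.inr hs
    · exact absurd hs h9
  have c34 : ¬((3:ℕ) ∈ S ∧ (4:ℕ) ∈ S) :=
    fun ⟨a, b⟩ => hcf 3 a 4 b (show ((3:ℕ),(4:ℕ)) ∈ LS from by decide)
  have c45 : ¬((4:ℕ) ∈ S ∧ (5:ℕ) ∈ S) :=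
    fun ⟨a, b⟩ => hcf 4 a 5 b (show ((4:ℕ),(5:ℕ)) ∈ LS from by decide)
  have c53 : ¬((5:ℕ) ∈ S ∧ (3:ℕ) ∈ S) :=
    fun ⟨a, b⟩ => hcf 5 a 3 b (show ((5:ℕ),(3:ℕ)) ∈ LS from by decide)
  tauto
lemma CAF_mono {σ τ : Semantics} (h : ∀ F : AF, σ F ⊆ τ F) : CAF σ ⊆ CAF τ := by
  intro F hF a ha
  obtain ⟨S, hS, haS⟩ := hF a ha
  exact ⟨S, h F hS, haS⟩

lemma CAF_sub_naive_of_cf {σ : Semantics} (h : ∀ F : AF, σ F ⊆ F.cf) :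
    CAF σ ⊆ CAF AF.naive := by
  intro F hF a ha
  obtain ⟨S, hS, haS⟩ := hF a ha
  obtain ⟨T, hT, hsub⟩ := exists_naive_superset F (h F hS)
  exact ⟨T, hT, hsub haS⟩
theorem compact_class_inclusions :
    CAF AF.sem ⊂ CAF AF.pref ∧
    ∀ σ ∈ ({AF.pref, AF.sem, AF.stage} : Set Semantics),
      CAF AF.stb ⊂ CAF σ ∧ CAF σ ⊂ CAF AF.naive := by
  have hpref_naive : CAF AF.pref ⊂ CAF AF.naive := by
    rw [Set.ssubset_def]
    refine ⟨CAF_sub_naive_of_cf (fun F S hS => hS.1.1), fun h => ?_⟩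
    exact F2_not_pref_compact (h F2_naive_compact)
  have hsem_naive : CAF AF.sem ⊂ CAF AF.naive := by
    rw [Set.ssubset_def]
    refine ⟨CAF_sub_naive_of_cf (fun F S hS => hS.1.1), fun h => ?_⟩
    exact F2_not_sem_compact (h F2_naive_compact)
  have hstage_naive : CAF AF.stage ⊂ CAF AF.naive := by
    rw [Set.ssubset_def]
    refine ⟨CAF_sub_naive_of_cf (fun F S hS => hS.1), fun h => ?_⟩
    exact F2_not_stage_compact (h F2_naive_compact)
  have hstb_pref : CAF AF.stb ⊂ CAF AF.pref := by
    rw [Set.ssubset_def]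
    refine ⟨CAF_mono (fun F => stb_subset_pref F), fun h => ?_⟩
    exact F1_not_stb_compact (h F1_pref_compact)
  have hstb_sem : CAF AF.stb ⊂ CAF AF.sem := by
    rw [Set.ssubset_def]
    refine ⟨CAF_mono (fun F => stb_subset_sem F), fun h => ?_⟩
    exact Fsem_not_stb_compact (h Fsem_sem_compact)
  have hstb_stage : CAF AF.stb ⊂ CAF AF.stage := by
    rw [Set.ssubset_def]
    refine ⟨CAF_mono (fun F => stb_subset_stage F), fun h => ?_⟩
    exact F3_not_stb_compact (h F3_stage_compact)
  have hsem_pref : CAF AF.sem ⊂ CAF AF.pref := by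
    rw [Set.ssubset_def]
    refine ⟨CAF_mono (fun F => sem_subset_pref F), fun h => ?_⟩
    exact F1_not_sem_compact (h F1_pref_compact)
  refine ⟨hsem_pref, ?_⟩
  intro σ hσ
  simp only [Set.mem_insert_iff, Set.mem_singleton_iff] at hσ
  rcases hσ with rfl | rfl | rfl
  · exact ⟨hstb_pref, hpref_naive⟩
  · exact ⟨hstb_sem, hsem_naive⟩
  · exact ⟨hstb_stage, hstage_naive⟩
end

section
/- Let σ ∈ {naive, stb, stage, pref, sem} and let F = (A,R) be an AF whose component-structure is K(F) = {K_1, …, K_n}. Then the map E ↦ (E ∩ K_1, …, E ∩ K_n) is a bijection from σ(F) onto the cartesian product σ(F|K_1) × … × σ(F|K_n), where F|K = (K, R ∩ (K × K)) is the restriction of F to K. -/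
section ComponentHelpers

variable {F : AF} {n : ℕ} {K : Fin n → Set ℕ}

open AF

private lemma sameComp_symm {a b : ℕ} (h : sameComp F a b) : sameComp F b a :=
  by
    haveI : Std.Symm (AFStep F) := ⟨fun _ _ hab => hab.symm⟩
    exact (Relation.ReflTransGen.stdSymm (r := AFStep F)).symm _ _ h

private lemma comp_closed {K' : Set ℕ} (h : K' ∈ comps F) {x y : ℕ} (hx : x ∈ K')
    (hy : y ∈ F.A) (hxy : sameComp F x y) : y ∈ K' := by
  obtain ⟨a, -, rfl⟩ := h
  exact ⟨hy, Relation.ReflTransGen.trans hx.2 hxy⟩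

private lemma comp_eq {K1 K2 : Set ℕ} (h1 : K1 ∈ comps F) (h2 : K2 ∈ comps F) {x : ℕ}
    (hx1 : x ∈ K1) (hx2 : x ∈ K2) : K1 = K2 := by
  obtain ⟨a, ha, rfl⟩ := h1
  obtain ⟨a', ha', rfl⟩ := h2
  have haa' : sameComp F a a' := Relation.ReflTransGen.trans hx1.2 (sameComp_symm hx2.2)
  ext b
  exact ⟨fun hb => ⟨hb.1, Relation.ReflTransGen.trans (sameComp_symm haa') hb.2⟩,
         fun hb => ⟨hb.1, Relation.ReflTransGen.trans haa' hb.2⟩⟩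

private lemma mem_resA {Kk : Set ℕ} {a : ℕ} :
    a ∈ (restrictAF F Kk).A ↔ a ∈ F.A ∧ a ∈ Kk := by
  simp [restrictAF]

private lemma inter_iUnion
    (huni : ∀ ⦃i j : Fin n⦄ ⦃x : ℕ⦄, x ∈ K i → x ∈ K j → i = j)
    {g : Fin n → Set ℕ} (hg : ∀ j, g j ⊆ K j) (i : Fin n) :
    (⋃ j, g j) ∩ K i = g i := by
  ext x
  constructor
  · rintro ⟨hx, hxK⟩
    obtain ⟨j, hj⟩ := Set.mem_iUnion.mp hx
    have hji : j = i := huni (hg j hj) hxK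
    exact hji ▸ hj
  · intro hx
    exact ⟨Set.mem_iUnion.mpr ⟨i, hx⟩, hg i hx⟩

private lemma eq_iUnion_inter
    (hcov : ∀ ⦃a : ℕ⦄, a ∈ F.A → ∃ i, a ∈ K i)
    {E : Set ℕ} (hE : E ⊆ (↑F.A : Set ℕ)) :
    E = ⋃ i, E ∩ K i := by
  ext x
  simp only [Set.mem_iUnion, Set.mem_inter_iff]
  constructor
  · intro hx
    obtain ⟨i, hi⟩ := hcov (Finset.mem_coe.mp (hE hx))
    exact ⟨i, hx, hi⟩
  · rintro ⟨i, hx, -⟩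
    exact hx

private lemma modif_self {E T : Set ℕ} {i : Fin n} (hT : T ⊆ K i) :
    ((E \ K i) ∪ T) ∩ K i = T := by
  ext x
  constructor
  · rintro ⟨hx | hx, hxK⟩
    · exact absurd hxK hx.2
    · exact hx
  · intro hx
    exact ⟨Or.inr hx, hT hx⟩

private lemma modif_other
    (huni : ∀ ⦃i j : Fin n⦄ ⦃x : ℕ⦄, x ∈ K i → x ∈ K j → i = j)
    {E T : Set ℕ} {i j : Fin n} (hT : T ⊆ K i) (hij : j ≠ i) :
    ((E \ K i) ∪ T) ∩ K j = E ∩ K j := by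
  ext x
  constructor
  · rintro ⟨hx | hx, hxK⟩
    · exact ⟨hx.1, hxK⟩
    · exact absurd (huni hxK (hT hx)) hij
  · rintro ⟨hxE, hxK⟩
    exact ⟨Or.inl ⟨hxE, fun h => hij (huni hxK h)⟩, hxK⟩

private lemma cf_inter
    (hedg : ∀ ⦃a b : ℕ⦄ (i : Fin n), (a, b) ∈ F.R → (a ∈ K i ↔ b ∈ K i))
    {E : Set ℕ} (hE : E ∈ F.cf) (i : Fin n) :
    E ∩ K i ∈ (restrictAF F (K i)).cf := by
  constructor
  · rintro a ⟨haE, haK⟩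
    exact Finset.mem_coe.mpr (mem_resA.mpr ⟨Finset.mem_coe.mp (hE.1 haE), haK⟩)
  · rintro a ha b hb hab
    exact hE.2 a ha.1 b hb.1 hab.1

private lemma cf_union
    (huni : ∀ ⦃i j : Fin n⦄ ⦃x : ℕ⦄, x ∈ K i → x ∈ K j → i = j)
    (hedg : ∀ ⦃a b : ℕ⦄ (i : Fin n), (a, b) ∈ F.R → (a ∈ K i ↔ b ∈ K i))
    {g : Fin n → Set ℕ}
    (hg : ∀ i, g i ∈ (restrictAF F (K i)).cf) : (⋃ i, g i) ∈ F.cf := by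
  have hgK : ∀ i, g i ⊆ K i := fun i x hx =>
    (mem_resA.mp (Finset.mem_coe.mp ((hg i).1 hx))).2
  constructor
  · intro x hx
    obtain ⟨i, hi⟩ := Set.mem_iUnion.mp hx
    exact Finset.mem_coe.mpr (mem_resA.mp (Finset.mem_coe.mp ((hg i).1 hi))).1
  · intro a ha b hb hab
    obtain ⟨i, hi⟩ := Set.mem_iUnion.mp ha
    obtain ⟨j, hj⟩ := Set.mem_iUnion.mp hb
    have hbKi : b ∈ K i := (hedg i hab).mp (hgK i hi)
    have hij : i = j := huni hbKi (hgK j hj)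
    subst hij
    exact (hg i).2 a hi b hj ⟨hab, hgK i hi, hbKi⟩

private lemma adm_inter
    (hedg : ∀ ⦃a b : ℕ⦄ (i : Fin n), (a, b) ∈ F.R → (a ∈ K i ↔ b ∈ K i))
    {E : Set ℕ} (hE : E ∈ F.adm) (i : Fin n) :
    E ∩ K i ∈ (restrictAF F (K i)).adm := by
  refine ⟨cf_inter hedg hE.1 i, ?_⟩
  rintro a ⟨haE, haK⟩ b hbR
  obtain ⟨hbF, hbK, -⟩ := hbR
  obtain ⟨s, hs, hsb⟩ := hE.2 a haE b hbF
  have hsK : s ∈ K i := (hedg i hsb).mpr hbK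
  exact ⟨s, ⟨hs, hsK⟩, hsb, hsK, hbK⟩

private lemma adm_union
    (huni : ∀ ⦃i j : Fin n⦄ ⦃x : ℕ⦄, x ∈ K i → x ∈ K j → i = j)
    (hedg : ∀ ⦃a b : ℕ⦄ (i : Fin n), (a, b) ∈ F.R → (a ∈ K i ↔ b ∈ K i))
    {g : Fin n → Set ℕ}
    (hg : ∀ i, g i ∈ (restrictAF F (K i)).adm) : (⋃ i, g i) ∈ F.adm := by
  have hgK : ∀ i, g i ⊆ K i := fun i x hx =>
    (mem_resA.mp (Finset.mem_coe.mp ((hg i).1.1 hx))).2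
  refine ⟨cf_union huni hedg (fun i => (hg i).1), ?_⟩
  intro a ha b hbR
  obtain ⟨i, hi⟩ := Set.mem_iUnion.mp ha
  have haK : a ∈ K i := hgK i hi
  have hbK : b ∈ K i := (hedg i hbR).mpr haK
  obtain ⟨s, hs, hsb⟩ := (hg i).2 a hi b ⟨hbR, hbK, haK⟩
  exact ⟨s, Set.mem_iUnion.mpr ⟨i, hs⟩, hsb.1⟩

private lemma rng_sub_A (G : AF) {S : Set ℕ} (hS : S ⊆ (↑G.A : Set ℕ)) :
    G.rng S ⊆ (↑G.A : Set ℕ) := by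
  rintro x (hx | ⟨s, _, hsx⟩)
  · exact hS hx
  · exact Finset.mem_coe.mpr (G.R_sub _ hsx).2

private lemma rng_inter
    (hedg : ∀ ⦃a b : ℕ⦄ (i : Fin n), (a, b) ∈ F.R → (a ∈ K i ↔ b ∈ K i))
    {E : Set ℕ} (i : Fin n) :
    F.rng E ∩ K i = (restrictAF F (K i)).rng (E ∩ K i) := by
  ext x
  constructor
  · rintro ⟨hx | ⟨s, hs, hsx⟩, hxK⟩
    · exact Or.inl ⟨hx, hxK⟩
    · exact Or.inr ⟨s, ⟨hs, (hedg i hsx).mpr hxK⟩, hsx, (hedg i hsx).mpr hxK, hxK⟩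
  · rintro (⟨hx, hxK⟩ | ⟨s, ⟨hs, -⟩, hsR, -, hxK⟩)
    · exact ⟨Or.inl hx, hxK⟩
    · exact ⟨Or.inr ⟨s, hs, hsR⟩, hxK⟩

end ComponentHelpers
section BijHelpers

open AF

variable {F : AF} {n : ℕ} {K : Fin n → Set ℕ}

private lemma bij_max
    (hcov : ∀ ⦃a : ℕ⦄, a ∈ F.A → ∃ i, a ∈ K i)
    (huni : ∀ ⦃i j : Fin n⦄ ⦃x : ℕ⦄, x ∈ K i → x ∈ K j → i = j)
    (base : AF → Set (Set ℕ))
    (hbA : ∀ (G : AF), ∀ E ∈ base G, E ⊆ (↑G.A : Set ℕ))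
    (hbi : ∀ E ∈ base F, ∀ i : Fin n, E ∩ K i ∈ base (restrictAF F (K i)))
    (hbu : ∀ g : Fin n → Set ℕ, (∀ i, g i ∈ base (restrictAF F (K i))) →
      (⋃ i, g i) ∈ base F) :
    Set.BijOn (fun (E : Set ℕ) (i : Fin n) => E ∩ K i)
      {S | S ∈ base F ∧ ∀ T ∈ base F, S ⊆ T → S = T}
      {g : Fin n → Set ℕ | ∀ i, g i ∈ {S | S ∈ base (restrictAF F (K i)) ∧
        ∀ T ∈ base (restrictAF F (K i)), S ⊆ T → S = T}} := by
  have hsubK : ∀ {Kk : Set ℕ} {S : Set ℕ}, S ∈ base (restrictAF F Kk) → S ⊆ Kk :=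
    fun {Kk S} hS x hx => (mem_resA.mp (Finset.mem_coe.mp (hbA _ S hS hx))).2
  refine ⟨?_, ?_, ?_⟩
  · rintro E ⟨hEb, hEmax⟩
    intro i
    refine ⟨hbi E hEb i, ?_⟩
    intro T hT hsubT
    have hTK : T ⊆ K i := hsubK hT
    have hpc : ∀ j : Fin n, ((E \ K i) ∪ T) ∩ K j ∈ base (restrictAF F (K j)) := by
      intro j
      by_cases hji : j = i
      · subst hji; rw [modif_self hTK]; exact hT
      · rw [modif_other huni hTK hji]; exact hbi E hEb j
    have hE'A : ((E \ K i) ∪ T) ⊆ (↑F.A : Set ℕ) := by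
      rintro x (hx | hx)
      · exact hbA F E hEb hx.1
      · exact Finset.mem_coe.mpr (mem_resA.mp (Finset.mem_coe.mp (hbA _ T hT hx))).1
    have hE'b : ((E \ K i) ∪ T) ∈ base F := by
      have h2 := hbu _ hpc
      rwa [← eq_iUnion_inter hcov hE'A] at h2
    have hEE' : E ⊆ (E \ K i) ∪ T := by
      intro x hx
      by_cases hxK : x ∈ K i
      · exact Or.inr (hsubT ⟨hx, hxK⟩)
      · exact Or.inl ⟨hx, hxK⟩
    have hEeq := hEmax _ hE'b hEE'
    calc E ∩ K i = ((E \ K i) ∪ T) ∩ K i := by rw [← hEeq]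
      _ = T := modif_self hTK
  · intro E hE E' hE' h
    rw [eq_iUnion_inter hcov (hbA F E hE.1), eq_iUnion_inter hcov (hbA F E' hE'.1)]
    exact Set.iUnion_congr fun i => congrFun h i
  · intro g hg
    have hgb : ∀ i, g i ∈ base (restrictAF F (K i)) := fun i => (hg i).1
    have hgK : ∀ i, g i ⊆ K i := fun i => hsubK (hgb i)
    refine ⟨⋃ i, g i, ⟨hbu _ hgb, ?_⟩, funext fun i => inter_iUnion huni hgK i⟩
    intro T hT hsubT
    have hTA : T ⊆ (↑F.A : Set ℕ) := hbA F T hT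
    have hgi : ∀ i, g i = T ∩ K i := by
      intro i
      refine (hg i).2 (T ∩ K i) (hbi T hT i) ?_
      intro x hx
      exact ⟨hsubT (Set.mem_iUnion.mpr ⟨i, hx⟩), hgK i hx⟩
    calc (⋃ i, g i) = ⋃ i, T ∩ K i := Set.iUnion_congr hgi
      _ = T := (eq_iUnion_inter hcov hTA).symm

private lemma bij_rng
    (hcov : ∀ ⦃a : ℕ⦄, a ∈ F.A → ∃ i, a ∈ K i)
    (huni : ∀ ⦃i j : Fin n⦄ ⦃x : ℕ⦄, x ∈ K i → x ∈ K j → i = j)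
    (hedg : ∀ ⦃a b : ℕ⦄ (i : Fin n), (a, b) ∈ F.R → (a ∈ K i ↔ b ∈ K i))
    (base : AF → Set (Set ℕ))
    (hbA : ∀ (G : AF), ∀ E ∈ base G, E ⊆ (↑G.A : Set ℕ))
    (hbi : ∀ E ∈ base F, ∀ i : Fin n, E ∩ K i ∈ base (restrictAF F (K i)))
    (hbu : ∀ g : Fin n → Set ℕ, (∀ i, g i ∈ base (restrictAF F (K i))) →
      (⋃ i, g i) ∈ base F) :
    Set.BijOn (fun (E : Set ℕ) (i : Fin n) => E ∩ K i)
      {S | S ∈ base F ∧ ¬ ∃ T ∈ base F, F.rng S ⊂ F.rng T}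
      {g : Fin n → Set ℕ | ∀ i, g i ∈ {S | S ∈ base (restrictAF F (K i)) ∧
        ¬ ∃ T ∈ base (restrictAF F (K i)),
          (restrictAF F (K i)).rng S ⊂ (restrictAF F (K i)).rng T}} := by
  have hsubK : ∀ {Kk : Set ℕ} {S : Set ℕ}, S ∈ base (restrictAF F Kk) → S ⊆ Kk :=
    fun {Kk S} hS x hx => (mem_resA.mp (Finset.mem_coe.mp (hbA _ S hS hx))).2
  refine ⟨?_, ?_, ?_⟩
  · rintro E ⟨hEb, hEmax⟩
    intro i
    refine ⟨hbi E hEb i, ?_⟩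
    rintro ⟨T, hT, hlt⟩
    apply hEmax
    have hTK : T ⊆ K i := hsubK hT
    classical
    set g' : Fin n → Set ℕ := fun j => if j = i then T else E ∩ K j with hg'def
    have hg'b : ∀ j, g' j ∈ base (restrictAF F (K j)) := by
      intro j
      by_cases hji : j = i
      · subst hji; simpa [hg'def] using hT
      · simpa [hg'def, hji] using hbi E hEb j
    have hg'K : ∀ j, g' j ⊆ K j := fun j => hsubK (hg'b j)
    have hUb : (⋃ j, g' j) ∈ base F := hbu _ hg'b
    refine ⟨⋃ j, g' j, hUb, ?_⟩
    have hEA : E ⊆ (↑F.A : Set ℕ) := hbA F E hEb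
    have hrngj : ∀ j, F.rng (⋃ j', g' j') ∩ K j = (restrictAF F (K j)).rng (g' j) := by
      intro j
      rw [rng_inter hedg, inter_iUnion huni hg'K]
    rw [Set.ssubset_def]
    constructor
    · intro x hx
      have hxA : x ∈ (↑F.A : Set ℕ) := rng_sub_A F hEA hx
      obtain ⟨j, hj⟩ := hcov (Finset.mem_coe.mp hxA)
      have hx' : x ∈ (restrictAF F (K j)).rng (E ∩ K j) := by
        rw [← rng_inter hedg]; exact ⟨hx, hj⟩
      by_cases hji : j = i
      · subst hji
        have hx2 : x ∈ (restrictAF F (K j)).rng T := subset_of_ssubset hlt hx'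
        have hx3 : x ∈ F.rng (⋃ j', g' j') ∩ K j := by
          rw [hrngj j]; simpa [hg'def] using hx2
        exact hx3.1
      · have hx2 : x ∈ (restrictAF F (K j)).rng (g' j) := by
          simpa [hg'def, hji] using hx'
        have hx3 : x ∈ F.rng (⋃ j', g' j') ∩ K j := by rw [hrngj j]; exact hx2
        exact hx3.1
    · intro hcon
      obtain ⟨y, hyT, hyE⟩ := Set.exists_of_ssubset hlt
      have hyK : y ∈ K i :=
        (mem_resA.mp (Finset.mem_coe.mp
          (rng_sub_A (restrictAF F (K i)) (hbA _ T hT) hyT))).2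
      have hyU : y ∈ F.rng (⋃ j', g' j') := by
        have : y ∈ F.rng (⋃ j', g' j') ∩ K i := by
          rw [hrngj i]; simpa [hg'def] using hyT
        exact this.1
      have hyE2 : y ∈ F.rng E ∩ K i := ⟨hcon hyU, hyK⟩
      rw [rng_inter hedg] at hyE2
      exact hyE hyE2
  · intro E hE E' hE' h
    rw [eq_iUnion_inter hcov (hbA F E hE.1), eq_iUnion_inter hcov (hbA F E' hE'.1)]
    exact Set.iUnion_congr fun i => congrFun h i
  · intro g hg
    have hgb : ∀ i, g i ∈ base (restrictAF F (K i)) := fun i => (hg i).1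
    have hgK : ∀ i, g i ⊆ K i := fun i => hsubK (hgb i)
    refine ⟨⋃ i, g i, ⟨hbu _ hgb, ?_⟩, funext fun i => inter_iUnion huni hgK i⟩
    rintro ⟨T, hT, hlt⟩
    have hTA : T ⊆ (↑F.A : Set ℕ) := hbA F T hT
    obtain ⟨x, hxT, hxU⟩ := Set.exists_of_ssubset hlt
    have hxA : x ∈ (↑F.A : Set ℕ) := rng_sub_A F hTA hxT
    obtain ⟨i, hi⟩ := hcov (Finset.mem_coe.mp hxA)
    apply (hg i).2
    refine ⟨T ∩ K i, hbi T hT i, ?_⟩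
    have h1 : (restrictAF F (K i)).rng (g i) = F.rng (⋃ j, g j) ∩ K i := by
      rw [rng_inter hedg, inter_iUnion huni hgK]
    rw [Set.ssubset_def]
    constructor
    · rw [h1, ← rng_inter hedg]
      exact fun y hy => ⟨subset_of_ssubset hlt hy.1, hy.2⟩
    · intro hcon
      apply hxU
      have hx2 : x ∈ (restrictAF F (K i)).rng (T ∩ K i) := by
        rw [← rng_inter hedg]; exact ⟨hxT, hi⟩
      have hx3 := hcon hx2
      rw [h1] at hx3
      exact hx3.1

private lemma bij_stb
    (hcov : ∀ ⦃a : ℕ⦄, a ∈ F.A → ∃ i, a ∈ K i)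
    (huni : ∀ ⦃i j : Fin n⦄ ⦃x : ℕ⦄, x ∈ K i → x ∈ K j → i = j)
    (hedg : ∀ ⦃a b : ℕ⦄ (i : Fin n), (a, b) ∈ F.R → (a ∈ K i ↔ b ∈ K i)) :
    Set.BijOn (fun (E : Set ℕ) (i : Fin n) => E ∩ K i) (AF.stb F)
      {g : Fin n → Set ℕ | ∀ i, g i ∈ AF.stb (restrictAF F (K i))} := by
  refine ⟨?_, ?_, ?_⟩
  · rintro E ⟨hEcf, hEst⟩
    intro i
    refine ⟨cf_inter hedg hEcf i, ?_⟩
    intro a ha hna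
    obtain ⟨haA, haK⟩ := mem_resA.mp ha
    have hnaE : a ∉ E := fun h => hna ⟨h, haK⟩
    obtain ⟨s, hs, hsa⟩ := hEst a haA hnaE
    have hsK : s ∈ K i := (hedg i hsa).mpr haK
    exact ⟨s, ⟨hs, hsK⟩, hsa, hsK, haK⟩
  · intro E hE E' hE' h
    rw [eq_iUnion_inter hcov hE.1.1, eq_iUnion_inter hcov hE'.1.1]
    exact Set.iUnion_congr fun i => congrFun h i
  · intro g hg
    have hgcf : ∀ i, g i ∈ (restrictAF F (K i)).cf := fun i => (hg i).1
    have hgK : ∀ i, g i ⊆ K i := fun i x hx =>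
      (mem_resA.mp (Finset.mem_coe.mp ((hgcf i).1 hx))).2
    refine ⟨⋃ i, g i, ⟨cf_union huni hedg hgcf, ?_⟩,
      funext fun i => inter_iUnion huni hgK i⟩
    intro a haA hna
    obtain ⟨i, hiK⟩ := hcov haA
    have hnag : a ∉ g i := fun h => hna (Set.mem_iUnion.mpr ⟨i, h⟩)
    obtain ⟨s, hs, hsa⟩ := (hg i).2 a (mem_resA.mpr ⟨haA, hiK⟩) hnag
    exact ⟨s, Set.mem_iUnion.mpr ⟨i, hs⟩, hsa.1⟩

end BijHelpers
theorem extensions_component_product (σ : Semantics) (hσ : σ ∈ StandardSemantics)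
    (F : AF) (n : ℕ) (K : Fin n → Set ℕ)
    (hinj : Function.Injective K) (hrange : Set.range K = comps F) :
    Set.BijOn (fun (E : Set ℕ) (i : Fin n) => E ∩ K i) (σ F)
      {g : Fin n → Set ℕ | ∀ i, g i ∈ σ (restrictAF F (K i))} := by
  have hKc : ∀ i, K i ∈ comps F := by
    intro i; rw [← hrange]; exact Set.mem_range_self i
  have hcov : ∀ ⦃a : ℕ⦄, a ∈ F.A → ∃ i, a ∈ K i := by
    intro a ha
    have hmem : {b ∈ (↑F.A : Set ℕ) | sameComp F a b} ∈ Set.range K := by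
      rw [hrange]; exact ⟨a, ha, rfl⟩
    obtain ⟨i, hi⟩ := hmem
    exact ⟨i, by rw [hi]; exact ⟨ha, Relation.ReflTransGen.refl⟩⟩
  have huni : ∀ ⦃i j : Fin n⦄ ⦃x : ℕ⦄, x ∈ K i → x ∈ K j → i = j :=
    fun i j x hi hj => hinj (comp_eq (hKc i) (hKc j) hi hj)
  have hedg : ∀ ⦃a b : ℕ⦄ (i : Fin n), (a, b) ∈ F.R → (a ∈ K i ↔ b ∈ K i) := by
    intro a b i hr
    have hab : sameComp F a b := Relation.ReflTransGen.single (Or.inl hr)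
    exact ⟨fun h => comp_closed (hKc i) h (F.R_sub _ hr).2 hab,
           fun h => comp_closed (hKc i) h (F.R_sub _ hr).1 (sameComp_symm hab)⟩
  simp only [StandardSemantics, Set.mem_insert_iff, Set.mem_singleton_iff] at hσ
  rcases hσ with h | h | h | h | h <;> subst h
  · exact bij_max hcov huni AF.cf (fun G E hE => hE.1)
      (fun E hE i => cf_inter hedg hE i) (fun g hg => cf_union huni hedg hg)
  · exact bij_stb hcov huni hedg
  · exact bij_rng hcov huni hedg AF.cf (fun G E hE => hE.1)
      (fun E hE i => cf_inter hedg hE i) (fun g hg => cf_union huni hedg hg)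
  · exact bij_max hcov huni AF.adm (fun G E hE => hE.1.1)
      (fun E hE i => adm_inter hedg hE i) (fun g hg => adm_union huni hedg hg)
  · exact bij_rng hcov huni hedg AF.adm (fun G E hE => hE.1.1)
      (fun E hE i => adm_inter hedg hE i) (fun g hg => adm_union huni hedg hg)
end

section
/- Let σ ∈ {naive, stb, stage, pref, sem} and let 𝕊 be an extension-set with |Arg_𝕊| = n that is realized by some σ-compact AF (σ(F) = 𝕊 for some σ-compact F). If |𝕊| is a prime number, then |𝕊| ≤ σ_max^con(n). -/
/- ===================== auxiliary development ===================== -/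

open Set

section Helpers

lemma mem_restrict_A {F : AF} {K : Set ℕ} {x : ℕ} :
    x ∈ (restrictAF F K).A ↔ x ∈ F.A ∧ x ∈ K := by
  simp [restrictAF]

lemma coe_restrict_A (F : AF) (K : Set ℕ) :
    ((restrictAF F K).A : Set ℕ) = (F.A : Set ℕ) ∩ K := by
  ext x
  simp [mem_restrict_A]

lemma mem_restrict_R {F : AF} {K : Set ℕ} {p : ℕ × ℕ} :
    p ∈ (restrictAF F K).R ↔ p ∈ F.R ∧ p.1 ∈ K ∧ p.2 ∈ K := Iff.rfl

/-- `K` is a union of connected components. -/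
def SplitSet (F : AF) (K : Set ℕ) : Prop := ∀ p ∈ F.R, (p.1 ∈ K ↔ p.2 ∈ K)

lemma SplitSet.compl {F : AF} {K : Set ℕ} (h : SplitSet F K) : SplitSet F Kᶜ := by
  intro p hp
  simp only [Set.mem_compl_iff]
  exact not_iff_not.mpr (h p hp)

/- ------------------- cf and adm under restriction -------------------- -/

lemma cf_inter_s10 {F : AF} {K : Set ℕ} {S : Set ℕ} (hS : S ∈ F.cf) :
    S ∩ K ∈ (restrictAF F K).cf := by
  refine ⟨?_, ?_⟩
  · rw [coe_restrict_A]
    exact fun x hx => ⟨hS.1 hx.1, hx.2⟩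
  · intro a ha b hb hab
    exact hS.2 a ha.1 b hb.1 hab.1

lemma cf_sub_K {F : AF} {K : Set ℕ} {S : Set ℕ} (hS : S ∈ (restrictAF F K).cf) :
    S ⊆ K := by
  intro x hx
  have := hS.1 hx
  rw [coe_restrict_A] at this
  exact this.2

lemma cf_sub_A {F : AF} {K : Set ℕ} {S : Set ℕ} (hS : S ∈ (restrictAF F K).cf) :
    S ⊆ ↑F.A := by
  intro x hx
  have := hS.1 hx
  rw [coe_restrict_A] at this
  exact this.1

lemma cf_union_s10 {F : AF} {K : Set ℕ} (h : SplitSet F K) {S₁ S₂ : Set ℕ}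
    (h₁ : S₁ ∈ (restrictAF F K).cf) (h₂ : S₂ ∈ (restrictAF F Kᶜ).cf) :
    S₁ ∪ S₂ ∈ F.cf := by
  have hK1 : S₁ ⊆ K := cf_sub_K h₁
  have hK2 : S₂ ⊆ Kᶜ := cf_sub_K h₂
  refine ⟨Set.union_subset (cf_sub_A h₁) (cf_sub_A h₂), ?_⟩
  rintro a (ha | ha) b (hb | hb) hab
  · exact h₁.2 a ha b hb ⟨hab, hK1 ha, hK1 hb⟩
  · exact hK2 hb ((h _ hab).mp (hK1 ha))
  · exact hK2 ha ((h _ hab).mpr (hK1 hb))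
  · exact h₂.2 a ha b hb ⟨hab, hK2 ha, hK2 hb⟩

lemma adm_inter_s10 {F : AF} {K : Set ℕ} (h : SplitSet F K) {S : Set ℕ} (hS : S ∈ F.adm) :
    S ∩ K ∈ (restrictAF F K).adm := by
  refine ⟨cf_inter_s10 hS.1, ?_⟩
  intro x hx b hb
  obtain ⟨s, hsS, hs⟩ := hS.2 x hx.1 b hb.1
  have hsK : s ∈ K := (h _ hs).mpr hb.2.1
  exact ⟨s, ⟨hsS, hsK⟩, hs, hsK, hb.2.1⟩

lemma adm_union_s10 {F : AF} {K : Set ℕ} (h : SplitSet F K) {S₁ S₂ : Set ℕ}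
    (h₁ : S₁ ∈ (restrictAF F K).adm) (h₂ : S₂ ∈ (restrictAF F Kᶜ).adm) :
    S₁ ∪ S₂ ∈ F.adm := by
  have hK1 : S₁ ⊆ K := cf_sub_K h₁.1
  have hK2 : S₂ ⊆ Kᶜ := cf_sub_K h₂.1
  refine ⟨cf_union_s10 h h₁.1 h₂.1, ?_⟩
  rintro x (hx | hx) b hb
  · have hbK : b ∈ K := (h _ hb).mpr (hK1 hx)
    obtain ⟨s, hs, hsb⟩ := h₁.2 x hx b ⟨hb, hbK, hK1 hx⟩
    exact ⟨s, Or.inl hs, hsb.1⟩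
  · have hbK : b ∈ Kᶜ := (h.compl _ hb).mpr (hK2 hx)
    obtain ⟨s, hs, hsb⟩ := h₂.2 x hx b ⟨hb, hbK, hK2 hx⟩
    exact ⟨s, Or.inr hs, hsb.1⟩

/- ------------------- ranges -------------------- -/

lemma rng_restrict {F : AF} {K : Set ℕ} (h : SplitSet F K) (S : Set ℕ) :
    (restrictAF F K).rng (S ∩ K) = F.rng S ∩ K := by
  ext x
  constructor
  · rintro (hx | ⟨s, hs, hsx⟩)
    · exact ⟨Or.inl hx.1, hx.2⟩
    · exact ⟨Or.inr ⟨s, hs.1, hsx.1⟩, hsx.2.2⟩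
  · rintro ⟨(hx | ⟨s, hs, hsx⟩), hxK⟩
    · exact Or.inl ⟨hx, hxK⟩
    · exact Or.inr ⟨s, ⟨hs, (h _ hsx).mpr hxK⟩, hsx, (h _ hsx).mpr hxK, hxK⟩

lemma rng_inter_split {F : AF} {K : Set ℕ} (h : SplitSet F K) (S : Set ℕ) :
    F.rng (S ∩ K) = F.rng S ∩ K := by
  ext x
  constructor
  · rintro (hx | ⟨s, hs, hsx⟩)
    · exact ⟨Or.inl hx.1, hx.2⟩
    · exact ⟨Or.inr ⟨s, hs.1, hsx⟩, (h _ hsx).mp hs.2⟩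
  · rintro ⟨(hx | ⟨s, hs, hsx⟩), hxK⟩
    · exact Or.inl ⟨hx, hxK⟩
    · exact Or.inr ⟨s, ⟨hs, (h _ hsx).mpr hxK⟩, hsx⟩

lemma rng_split_subset {F : AF} {K : Set ℕ} (h : SplitSet F K) {T : Set ℕ} (hT : T ⊆ K) :
    F.rng T ⊆ K := by
  rintro x (hx | ⟨s, hs, hsx⟩)
  · exact hT hx
  · exact (h _ hsx).mp (hT hs)

lemma rng_restrict_sub {F : AF} {K : Set ℕ} {S : Set ℕ} (hS : S ⊆ K) :
    (restrictAF F K).rng S ⊆ K := by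
  rintro x (hx | ⟨s, hs, hsx⟩)
  · exact hS hx
  · exact hsx.2.2

lemma rng_restrict_eq {F : AF} {K : Set ℕ} (h : SplitSet F K) {T : Set ℕ} (hT : T ⊆ K) :
    F.rng T = (restrictAF F K).rng T := by
  have h1 := rng_restrict h T
  rw [Set.inter_eq_left.mpr hT] at h1
  rw [h1]
  exact (Set.inter_eq_left.mpr (rng_split_subset h hT)).symm

lemma rng_union (F : AF) (X Y : Set ℕ) : F.rng (X ∪ Y) = F.rng X ∪ F.rng Y := by
  ext x
  simp only [AF.rng, Set.mem_union, Set.mem_setOf_eq]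
  constructor
  · rintro ((hx | hx) | ⟨s, (hs | hs), hsx⟩)
    · exact Or.inl (Or.inl hx)
    · exact Or.inr (Or.inl hx)
    · exact Or.inl (Or.inr ⟨s, hs, hsx⟩)
    · exact Or.inr (Or.inr ⟨s, hs, hsx⟩)
  · rintro ((hx | ⟨s, hs, hsx⟩) | (hx | ⟨s, hs, hsx⟩))
    · exact Or.inl (Or.inl hx)
    · exact Or.inr ⟨s, Or.inl hs, hsx⟩
    · exact Or.inl (Or.inr hx)
    · exact Or.inr ⟨s, Or.inr hs, hsx⟩

lemma rng_empty_set (F : AF) : F.rng ∅ = ∅ := by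
  ext x
  simp [AF.rng]

/- ------------------- set strictness helpers -------------------- -/

lemma union_ssubset_union {K A₁ B₁ X : Set ℕ} (hB : B₁ ⊆ K) (hX : X ⊆ Kᶜ)
    (h : A₁ ⊂ B₁) : A₁ ∪ X ⊂ B₁ ∪ X := by
  refine ⟨Set.union_subset_union_left X h.subset, fun hc => ?_⟩
  apply h.not_subset
  intro b hb
  rcases hc (Or.inl hb) with h' | h'
  · exact h'
  · exact absurd (hB hb) (hX h')

lemma ssubset_of_union_ssubset {K A₁ B₁ X : Set ℕ} (hA : A₁ ⊆ K) (hB : B₁ ⊆ K)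
    (hX : X ⊆ Kᶜ) (h : A₁ ∪ X ⊂ B₁ ∪ X) : A₁ ⊂ B₁ := by
  have hsub : A₁ ⊆ B₁ := by
    intro x hx
    rcases h.subset (Or.inl hx) with h' | h'
    · exact h'
    · exact absurd (hA hx) (hX h')
  obtain ⟨w, hw, hwn⟩ := Set.exists_of_ssubset h
  rcases hw with hw | hw
  · exact (Set.ssubset_iff_of_subset hsub).mpr ⟨w, hw, fun hc => hwn (Or.inl hc)⟩
  · exact absurd (Or.inr hw) hwn

lemma union_split_ssubset {K A₁ B₁ A₂ B₂ : Set ℕ} (hA₁ : A₁ ⊆ K) (hB₁ : B₁ ⊆ K)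
    (hA₂ : A₂ ⊆ Kᶜ) (hB₂ : B₂ ⊆ Kᶜ) (h : A₁ ∪ A₂ ⊂ B₁ ∪ B₂) :
    (A₁ ⊂ B₁ ∧ A₂ ⊆ B₂) ∨ (A₁ ⊆ B₁ ∧ A₂ ⊂ B₂) := by
  have hs₁ : A₁ ⊆ B₁ := by
    intro x hx
    rcases h.subset (Or.inl hx) with h' | h'
    · exact h'
    · exact absurd (hA₁ hx) (hB₂ h')
  have hs₂ : A₂ ⊆ B₂ := by
    intro x hx
    rcases h.subset (Or.inr hx) with h' | h'
    · exact absurd (hB₁ h') (hA₂ hx)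
    · exact h'
  obtain ⟨w, hw, hwn⟩ := Set.exists_of_ssubset h
  rcases hw with hw | hw
  · exact Or.inl ⟨(Set.ssubset_iff_of_subset hs₁).mpr ⟨w, hw, fun hc => hwn (Or.inl hc)⟩, hs₂⟩
  · exact Or.inr ⟨hs₁, (Set.ssubset_iff_of_subset hs₂).mpr ⟨w, hw, fun hc => hwn (Or.inr hc)⟩⟩

end Helpers
/- ------------------- generic maximal and range-maximal semantics ------------- -/

def smax (B : AF → Set (Set ℕ)) (F : AF) : Set (Set ℕ) :=
  {S | S ∈ B F ∧ ∀ T ∈ B F, S ⊆ T → S = T}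

def rmax (B : AF → Set (Set ℕ)) (F : AF) : Set (Set ℕ) :=
  {S | S ∈ B F ∧ ¬ ∃ T ∈ B F, F.rng S ⊂ F.rng T}

lemma naive_eq_smax (F : AF) : F.naive = smax AF.cf F := rfl
lemma pref_eq_smax (F : AF) : F.pref = smax AF.adm F := rfl
lemma stage_eq_rmax (F : AF) : F.stage = rmax AF.cf F := rfl
lemma sem_eq_rmax (F : AF) : F.sem = rmax AF.adm F := rfl

section Generic

variable {B : AF → Set (Set ℕ)}
  (hBcf : ∀ G : AF, B G ⊆ G.cf)
  (hBinter : ∀ (G : AF) (K : Set ℕ), SplitSet G K → ∀ S ∈ B G, S ∩ K ∈ B (restrictAF G K))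
  (hBunion : ∀ (G : AF) (K : Set ℕ), SplitSet G K →
    ∀ S₁ ∈ B (restrictAF G K), ∀ S₂ ∈ B (restrictAF G Kᶜ), S₁ ∪ S₂ ∈ B G)

include hBcf hBinter hBunion in
lemma smax_inter (G : AF) (K : Set ℕ) (h : SplitSet G K) :
    ∀ S ∈ smax B G, S ∩ K ∈ smax B (restrictAF G K) := by
  intro S hS
  refine ⟨hBinter G K h S hS.1, ?_⟩
  intro T hT hsub
  have hTK : T ⊆ K := cf_sub_K (hBcf _ hT)
  have hglue : T ∪ S ∩ Kᶜ ∈ B G := hBunion G K h T hT _ (hBinter G Kᶜ h.compl S hS.1)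
  have hSsub : S ⊆ T ∪ S ∩ Kᶜ := by
    intro x hx
    by_cases hxK : x ∈ K
    · exact Or.inl (hsub ⟨hx, hxK⟩)
    · exact Or.inr ⟨hx, hxK⟩
  have hEq := hS.2 _ hglue hSsub
  apply Set.Subset.antisymm
  · intro x hx
    have hx' : x ∈ T ∪ S ∩ Kᶜ := by rw [← hEq]; exact hx.1
    rcases hx' with h' | h'
    · exact h'
    · exact absurd hx.2 h'.2
  · intro x hx
    refine ⟨?_, hTK hx⟩
    rw [hEq]
    exact Or.inl hx

include hBcf hBinter hBunion in
lemma smax_union (G : AF) (K : Set ℕ) (h : SplitSet G K) :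
    ∀ S₁ ∈ smax B (restrictAF G K), ∀ S₂ ∈ smax B (restrictAF G Kᶜ),
      S₁ ∪ S₂ ∈ smax B G := by
  intro S₁ h₁ S₂ h₂
  have hK1 : S₁ ⊆ K := cf_sub_K (hBcf _ h₁.1)
  have hK2 : S₂ ⊆ Kᶜ := cf_sub_K (hBcf _ h₂.1)
  refine ⟨hBunion G K h S₁ h₁.1 S₂ h₂.1, ?_⟩
  intro T hT hsub
  have e₁ : S₁ = T ∩ K :=
    h₁.2 _ (hBinter G K h T hT) (fun x hx => ⟨hsub (Or.inl hx), hK1 hx⟩)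
  have e₂ : S₂ = T ∩ Kᶜ :=
    h₂.2 _ (hBinter G Kᶜ h.compl T hT) (fun x hx => ⟨hsub (Or.inr hx), hK2 hx⟩)
  rw [e₁, e₂, Set.inter_union_compl]

include hBcf hBinter hBunion in
lemma rmax_inter (G : AF) (K : Set ℕ) (h : SplitSet G K) :
    ∀ S ∈ rmax B G, S ∩ K ∈ rmax B (restrictAF G K) := by
  intro S hS
  refine ⟨hBinter G K h S hS.1, ?_⟩
  rintro ⟨T, hT, hsub⟩
  apply hS.2
  have hTK : T ⊆ K := cf_sub_K (hBcf _ hT)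
  refine ⟨T ∪ S ∩ Kᶜ, hBunion G K h T hT _ (hBinter G Kᶜ h.compl S hS.1), ?_⟩
  have eS : G.rng S = (restrictAF G K).rng (S ∩ K) ∪ G.rng S ∩ Kᶜ := by
    rw [rng_restrict h, Set.inter_union_compl]
  have eT : G.rng (T ∪ S ∩ Kᶜ) = (restrictAF G K).rng T ∪ G.rng S ∩ Kᶜ := by
    rw [rng_union]
    congr 1
    · exact rng_restrict_eq h hTK
    · exact rng_inter_split h.compl S
  rw [eS, eT]
  exact union_ssubset_union (rng_restrict_sub hTK) (fun x hx => hx.2) hsub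

include hBcf hBinter hBunion in
lemma rmax_union (G : AF) (K : Set ℕ) (h : SplitSet G K) :
    ∀ S₁ ∈ rmax B (restrictAF G K), ∀ S₂ ∈ rmax B (restrictAF G Kᶜ),
      S₁ ∪ S₂ ∈ rmax B G := by
  intro S₁ h₁ S₂ h₂
  have hK1 : S₁ ⊆ K := cf_sub_K (hBcf _ h₁.1)
  have hK2 : S₂ ⊆ Kᶜ := cf_sub_K (hBcf _ h₂.1)
  refine ⟨hBunion G K h S₁ h₁.1 S₂ h₂.1, ?_⟩
  rintro ⟨T, hT, hsub⟩
  have e₁ : (S₁ ∪ S₂) ∩ K = S₁ := by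
    apply Set.Subset.antisymm
    · rintro x ⟨hx | hx, hxK⟩
      · exact hx
      · exact absurd hxK (hK2 hx)
    · exact fun x hx => ⟨Or.inl hx, hK1 hx⟩
  have e₂ : (S₁ ∪ S₂) ∩ Kᶜ = S₂ := by
    apply Set.Subset.antisymm
    · rintro x ⟨hx | hx, hxK⟩
      · exact absurd (hK1 hx) hxK
      · exact hx
    · exact fun x hx => ⟨Or.inr hx, hK2 hx⟩
  have eS : G.rng (S₁ ∪ S₂) = (restrictAF G K).rng S₁ ∪ (restrictAF G Kᶜ).rng S₂ := by
    conv_lhs => rw [← Set.inter_union_compl (G.rng (S₁ ∪ S₂)) K]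
    rw [← rng_restrict h, ← rng_restrict h.compl, e₁, e₂]
  have eT : G.rng T = (restrictAF G K).rng (T ∩ K) ∪ (restrictAF G Kᶜ).rng (T ∩ Kᶜ) := by
    conv_lhs => rw [← Set.inter_union_compl (G.rng T) K]
    rw [← rng_restrict h, ← rng_restrict h.compl]
  rw [eS, eT] at hsub
  rcases union_split_ssubset (rng_restrict_sub hK1)
      (rng_restrict_sub (fun x hx => hx.2 : T ∩ K ⊆ K))
      (rng_restrict_sub hK2) (rng_restrict_sub (fun x hx => hx.2 : T ∩ Kᶜ ⊆ Kᶜ)) hsub with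
    hst | hst
  · exact h₁.2 ⟨T ∩ K, hBinter G K h T hT, hst.1⟩
  · exact h₂.2 ⟨T ∩ Kᶜ, hBinter G Kᶜ h.compl T hT, hst.2⟩

end Generic
/- ------------------- stb under splitting -------------------- -/

lemma stb_cf (G : AF) : G.stb ⊆ G.cf := fun _ hS => hS.1

lemma stb_inter (G : AF) (K : Set ℕ) (h : SplitSet G K) :
    ∀ S ∈ G.stb, S ∩ K ∈ (restrictAF G K).stb := by
  intro S hS
  refine ⟨cf_inter_s10 hS.1, ?_⟩
  intro x hx hxS
  obtain ⟨hxA, hxK⟩ := mem_restrict_A.mp hx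
  obtain ⟨s, hs, hsx⟩ := hS.2 x hxA (fun hc => hxS ⟨hc, hxK⟩)
  have hsK : s ∈ K := (h _ hsx).mpr hxK
  exact ⟨s, ⟨hs, hsK⟩, hsx, hsK, hxK⟩

lemma stb_union (G : AF) (K : Set ℕ) (h : SplitSet G K) :
    ∀ S₁ ∈ (restrictAF G K).stb, ∀ S₂ ∈ (restrictAF G Kᶜ).stb,
      S₁ ∪ S₂ ∈ G.stb := by
  intro S₁ h₁ S₂ h₂
  refine ⟨cf_union_s10 h h₁.1 h₂.1, ?_⟩
  intro x hxA hxS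
  by_cases hxK : x ∈ K
  · obtain ⟨s, hs, hsx⟩ := h₁.2 x (mem_restrict_A.mpr ⟨hxA, hxK⟩) (fun hc => hxS (Or.inl hc))
    exact ⟨s, Or.inl hs, hsx.1⟩
  · obtain ⟨s, hs, hsx⟩ := h₂.2 x (mem_restrict_A.mpr ⟨hxA, hxK⟩) (fun hc => hxS (Or.inr hc))
    exact ⟨s, Or.inr hs, hsx.1⟩

/- ------------------- attack-free frameworks -------------------- -/

lemma cf_full {G : AF} (hR : G.R = ∅) : (↑G.A : Set ℕ) ∈ G.cf := by
  refine ⟨le_refl _, ?_⟩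
  intro a _ b _ hab
  rw [hR] at hab
  exact hab

lemma adm_eq_cf_of_empty {G : AF} (hR : G.R = ∅) : G.adm = G.cf := by
  ext S
  constructor
  · exact fun h => h.1
  · intro h
    refine ⟨h, ?_⟩
    intro a _ b hb
    rw [hR] at hb
    exact absurd hb (Set.notMem_empty _)

lemma smax_empty {B : AF → Set (Set ℕ)} {G : AF} (hR : G.R = ∅) (hBeq : B G = G.cf) :
    smax B G = {(↑G.A : Set ℕ)} := by
  ext S
  constructor
  · intro hS
    have hcf : S ∈ G.cf := hBeq ▸ hS.1
    exact hS.2 _ (by rw [hBeq]; exact cf_full hR) hcf.1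
  · rintro rfl
    refine ⟨by rw [hBeq]; exact cf_full hR, ?_⟩
    intro T hT hsub
    have : T ∈ G.cf := hBeq ▸ hT
    exact Set.Subset.antisymm hsub this.1

lemma rng_of_empty {G : AF} (hR : G.R = ∅) (S : Set ℕ) : G.rng S = S := by
  ext x
  simp [AF.rng, hR]

lemma rmax_empty {B : AF → Set (Set ℕ)} {G : AF} (hR : G.R = ∅) (hBeq : B G = G.cf) :
    rmax B G = {(↑G.A : Set ℕ)} := by
  ext S
  constructor
  · intro hS
    have hcf : S ∈ G.cf := hBeq ▸ hS.1
    by_contra hne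
    apply hS.2
    refine ⟨↑G.A, by rw [hBeq]; exact cf_full hR, ?_⟩
    rw [rng_of_empty hR, rng_of_empty hR]
    exact HasSubset.Subset.ssubset_of_ne hcf.1 hne
  · rintro rfl
    refine ⟨by rw [hBeq]; exact cf_full hR, ?_⟩
    rintro ⟨T, hT, hsub⟩
    rw [rng_of_empty hR, rng_of_empty hR] at hsub
    have : T ∈ G.cf := hBeq ▸ hT
    exact hsub.not_subset this.1

lemma stb_empty {G : AF} (hR : G.R = ∅) : G.stb = {(↑G.A : Set ℕ)} := by
  ext S
  constructor
  · intro hS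
    apply Set.Subset.antisymm hS.1.1
    intro x hx
    by_contra hc
    obtain ⟨s, _, hs⟩ := hS.2 x hx hc
    rw [hR] at hs
    exact hs
  · rintro rfl
    exact ⟨cf_full hR, fun x hx hc => absurd hx hc⟩

/- ------------------- the connectification construction -------------------- -/

def connectify (F : AF) (K : Set ℕ) : AF where
  A := F.A
  R := F.R ∪ (↑F.A : Set ℕ) ×ˢ ((↑F.A : Set ℕ) \ K)
  R_sub := by
    rintro ⟨x, y⟩ (hr | hp)
    · exact F.R_sub _ hr
    · exact ⟨hp.1, hp.2.1⟩

lemma cf_connectify (G : AF) (K : Set ℕ) :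
    (connectify G K).cf = (restrictAF G K).cf := by
  ext S
  constructor
  · rintro ⟨hsub, hcf⟩
    have hSK : ∀ x ∈ S, x ∈ K := by
      intro x hx
      by_contra hxK
      exact hcf x hx x hx (Or.inr ⟨hsub hx, hsub hx, hxK⟩)
    refine ⟨?_, ?_⟩
    · rw [coe_restrict_A]
      exact fun x hx => ⟨hsub hx, hSK x hx⟩
    · intro a ha b hb hab
      exact hcf a ha b hb (Or.inl hab.1)
  · rintro ⟨hsub, hcf⟩
    have hSK : S ⊆ K := by
      intro x hx
      have := hsub hx
      rw [coe_restrict_A] at this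
      exact this.2
    have hSA : S ⊆ ↑G.A := by
      intro x hx
      have := hsub hx
      rw [coe_restrict_A] at this
      exact this.1
    refine ⟨hSA, ?_⟩
    rintro a ha b hb (hab | hab)
    · exact hcf a ha b hb ⟨hab, hSK ha, hSK hb⟩
    · exact hab.2.2 (hSK hb)

lemma adm_connectify (G : AF) (K : Set ℕ) (hK : ∀ p ∈ G.R, p.1 ∈ K ∧ p.2 ∈ K) :
    (connectify G K).adm = (restrictAF G K).adm := by
  ext S
  constructor
  · rintro ⟨hcf, hdef⟩
    have hcf' : S ∈ (restrictAF G K).cf := by rw [← cf_connectify]; exact hcf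
    have hSK : S ⊆ K := cf_sub_K hcf'
    refine ⟨hcf', ?_⟩
    intro x hx b hb
    obtain ⟨s, hs, hsb⟩ := hdef x hx b (Or.inl hb.1)
    rcases hsb with hsb | hsb
    · exact ⟨s, hs, hsb, hSK hs, hb.2.1⟩
    · exact absurd hb.2.1 hsb.2.2
  · rintro ⟨hcf, hdef⟩
    have hSK : S ⊆ K := cf_sub_K hcf
    refine ⟨by rw [cf_connectify]; exact hcf, ?_⟩
    rintro x hx b (hb | hb)
    · obtain ⟨s, hs, hsb⟩ := hdef x hx b ⟨hb, (hK _ hb).1, (hK _ hb).2⟩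
      exact ⟨s, hs, Or.inl hsb.1⟩
    · exact absurd (hSK hx) hb.2.2

lemma rng_connectify {G : AF} {K : Set ℕ} {S : Set ℕ}
    (hK : ∀ p ∈ G.R, p.1 ∈ K ∧ p.2 ∈ K) (hSK : S ⊆ K) (hSA : S ⊆ ↑G.A)
    (hne : S.Nonempty) :
    (connectify G K).rng S = (restrictAF G K).rng S ∪ ((↑G.A : Set ℕ) \ K) := by
  ext x
  constructor
  · rintro (hx | ⟨s, hs, hsx⟩)
    · exact Or.inl (Or.inl hx)
    · rcases hsx with hr | hp
      · exact Or.inl (Or.inr ⟨s, hs, hr, hSK hs, (hK _ hr).2⟩)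
      · exact Or.inr hp.2
  · rintro ((hx | ⟨s, hs, hsx⟩) | hx)
    · exact Or.inl hx
    · exact Or.inr ⟨s, hs, Or.inl hsx.1⟩
    · obtain ⟨s₀, hs₀⟩ := hne
      exact Or.inr ⟨s₀, hs₀, Or.inr ⟨hSA hs₀, hx⟩⟩
/- ------------------- semantics on the connectification -------------------- -/

lemma smax_connectify {B : AF → Set (Set ℕ)} (G : AF) (K : Set ℕ)
    (hBeq : B (connectify G K) = B (restrictAF G K)) :
    smax B (restrictAF G K) ⊆ smax B (connectify G K) := by
  unfold smax
  rw [hBeq]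

lemma rmax_connectify {B : AF → Set (Set ℕ)} (hBcf : ∀ G : AF, B G ⊆ G.cf)
    (G : AF) (K : Set ℕ)
    (hK : ∀ p ∈ G.R, p.1 ∈ K ∧ p.2 ∈ K)
    (hBeq : B (connectify G K) = B (restrictAF G K))
    (h2 : 2 ≤ (rmax B (restrictAF G K)).ncard) :
    rmax B (restrictAF G K) ⊆ rmax B (connectify G K) := by
  have hne : ∀ S ∈ rmax B (restrictAF G K), S.Nonempty := by
    intro S hS
    rcases Set.eq_empty_or_nonempty S with rfl | h
    · exfalso
      have hsub : rmax B (restrictAF G K) ⊆ {(∅ : Set ℕ)} := by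
        intro T hT
        have hTe : T = ∅ := by
          by_contra hTne
          apply hS.2
          refine ⟨T, hT.1, ?_⟩
          rw [rng_empty_set]
          refine Set.empty_ssubset.mpr ?_
          obtain ⟨y, hy⟩ := Set.nonempty_iff_ne_empty.mpr hTne
          exact ⟨y, Or.inl hy⟩
        rw [hTe]
        rfl
      have := Set.ncard_le_ncard hsub (Set.finite_singleton ∅)
      rw [Set.ncard_singleton] at this
      omega
    · exact h
  intro S hS
  have hSne := hne S hS
  have hScf : S ∈ (restrictAF G K).cf := hBcf _ hS.1
  have hSK : S ⊆ K := cf_sub_K hScf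
  have hSA : S ⊆ ↑G.A := cf_sub_A hScf
  refine ⟨by rw [hBeq]; exact hS.1, ?_⟩
  rintro ⟨T, hT, hsub⟩
  have hT1 : T ∈ B (restrictAF G K) := by rw [← hBeq]; exact hT
  have hTcf : T ∈ (restrictAF G K).cf := hBcf _ hT1
  have hTK : T ⊆ K := cf_sub_K hTcf
  have hTA : T ⊆ ↑G.A := cf_sub_A hTcf
  rcases Set.eq_empty_or_nonempty T with rfl | hTne
  · rw [rng_empty_set] at hsub
    obtain ⟨y, hy⟩ := hSne
    exact absurd (hsub.subset (Or.inl hy)) (Set.notMem_empty y)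
  · rw [rng_connectify hK hSK hSA hSne, rng_connectify hK hTK hTA hTne] at hsub
    exact hS.2 ⟨T, hT1,
      ssubset_of_union_ssubset (rng_restrict_sub hSK) (rng_restrict_sub hTK)
        (fun x hx => hx.2) hsub⟩

lemma stb_connectify (G : AF) (K : Set ℕ)
    (hK : ∀ p ∈ G.R, p.1 ∈ K ∧ p.2 ∈ K)
    (h2 : 2 ≤ ((restrictAF G K).stb).ncard) :
    (restrictAF G K).stb ⊆ (connectify G K).stb := by
  intro S hS
  have hSK : S ⊆ K := cf_sub_K hS.1
  have hSA : S ⊆ ↑G.A := cf_sub_A hS.1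
  have hSne : S.Nonempty := by
    rcases Set.eq_empty_or_nonempty S with rfl | h
    · exfalso
      have hAe : (restrictAF G K).A = ∅ := by
        by_contra hc
        obtain ⟨y, hy⟩ := Finset.nonempty_iff_ne_empty.mpr hc
        obtain ⟨s, hs, -⟩ := hS.2 y hy (Set.notMem_empty y)
        exact hs
      have hsub : (restrictAF G K).stb ⊆ {(∅ : Set ℕ)} := by
        intro T hT
        have : T ⊆ (∅ : Set ℕ) := by
          have := hT.1.1
          rw [hAe] at this
          simpa using this
        simpa using Set.subset_empty_iff.mp this
      have := Set.ncard_le_ncard hsub (Set.finite_singleton ∅)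
      rw [Set.ncard_singleton] at this
      omega
    · exact h
  refine ⟨by rw [cf_connectify]; exact hS.1, ?_⟩
  intro x hxA hxS
  by_cases hxK : x ∈ K
  · obtain ⟨s, hs, hsx⟩ := hS.2 x (mem_restrict_A.mpr ⟨hxA, hxK⟩) hxS
    exact ⟨s, hs, Or.inl hsx.1⟩
  · obtain ⟨s₀, hs₀⟩ := hSne
    exact ⟨s₀, hs₀, Or.inr ⟨hSA hs₀, Finset.mem_coe.mpr hxA, hxK⟩⟩

/- ------------------- counting -------------------- -/

lemma sigma_finite {G : AF} {W : Set (Set ℕ)} (hsub : W ⊆ G.cf) : W.Finite := by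
  apply Set.Finite.subset (G.A.finite_toSet.finite_subsets)
  intro S hS
  exact (hsub hS).1

lemma ncard_prod_sets (s t : Set (Set ℕ)) : (s ×ˢ t).ncard = s.ncard * t.ncard := by
  rw [← Nat.card_coe_set_eq, ← Nat.card_coe_set_eq, ← Nat.card_coe_set_eq,
    Nat.card_congr (Equiv.Set.prod s t), Nat.card_prod]

lemma ncard_sigma_le {G : AF} {W : Set (Set ℕ)} (hsub : W ⊆ G.cf) :
    W.ncard ≤ 2 ^ G.A.card := by
  classical
  have h1 : W.ncard ≤ (↑G.A.powerset : Set (Finset ℕ)).ncard := by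
    apply Set.ncard_le_ncard_of_injOn (fun S => G.A.filter (fun x => x ∈ S))
    · intro S _
      simp only [Finset.mem_coe, Finset.mem_powerset]
      exact Finset.filter_subset _ _
    · intro S hS T hT hEq
      have hEq' : G.A.filter (fun x => x ∈ S) = G.A.filter (fun x => x ∈ T) := hEq
      ext x
      constructor
      · intro hx
        have hxA : x ∈ G.A := (hsub hS).1 hx
        have hmem : x ∈ G.A.filter (fun x => x ∈ S) := Finset.mem_filter.mpr ⟨hxA, hx⟩
        rw [hEq'] at hmem
        exact (Finset.mem_filter.mp hmem).2
      · intro hx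
        have hxA : x ∈ G.A := (hsub hT).1 hx
        have hmem : x ∈ G.A.filter (fun x => x ∈ T) := Finset.mem_filter.mpr ⟨hxA, hx⟩
        rw [← hEq'] at hmem
        exact (Finset.mem_filter.mp hmem).2
  rwa [Set.ncard_coe_finset, Finset.card_powerset] at h1

lemma bij_of (σ : Semantics)
    (hcf : ∀ G : AF, σ G ⊆ G.cf)
    (hinter : ∀ (G : AF) (K : Set ℕ), SplitSet G K → ∀ S ∈ σ G, S ∩ K ∈ σ (restrictAF G K))
    (hunion : ∀ (G : AF) (K : Set ℕ), SplitSet G K →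
      ∀ S₁ ∈ σ (restrictAF G K), ∀ S₂ ∈ σ (restrictAF G Kᶜ), S₁ ∪ S₂ ∈ σ G)
    (G : AF) (K : Set ℕ) (h : SplitSet G K) :
    Set.BijOn (fun S => (S ∩ K, S ∩ Kᶜ)) (σ G)
      ((σ (restrictAF G K)) ×ˢ (σ (restrictAF G Kᶜ))) := by
  refine ⟨?_, ?_, ?_⟩
  · intro S hS
    exact Set.mem_prod.mpr ⟨hinter G K h S hS, hinter G Kᶜ h.compl S hS⟩
  · intro S _ T _ hEq
    have e1 : S ∩ K = T ∩ K := congrArg Prod.fst hEq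
    have e2 : S ∩ Kᶜ = T ∩ Kᶜ := congrArg Prod.snd hEq
    rw [← Set.inter_union_compl S K, ← Set.inter_union_compl T K, e1, e2]
  · rintro ⟨S₁, S₂⟩ hmem
    obtain ⟨h₁, h₂⟩ := Set.mem_prod.mp hmem
    have hK1 : S₁ ⊆ K := cf_sub_K (hcf _ h₁)
    have hK2 : S₂ ⊆ Kᶜ := cf_sub_K (hcf _ h₂)
    refine ⟨S₁ ∪ S₂, hunion G K h S₁ h₁ S₂ h₂, ?_⟩
    have e₁ : (S₁ ∪ S₂) ∩ K = S₁ := by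
      apply Set.Subset.antisymm
      · rintro x ⟨hx | hx, hxK⟩
        · exact hx
        · exact absurd hxK (hK2 hx)
      · exact fun x hx => ⟨Or.inl hx, hK1 hx⟩
    have e₂ : (S₁ ∪ S₂) ∩ Kᶜ = S₂ := by
      apply Set.Subset.antisymm
      · rintro x ⟨hx | hx, hxK⟩
        · exact absurd (hK1 hx) hxK
        · exact hx
      · exact fun x hx => ⟨Or.inr hx, hK2 hx⟩
    simp only [e₁, e₂]
/- ------------------- the main auxiliary lemma -------------------- -/

lemma main_aux (σ : Semantics)
    (hcf : ∀ G : AF, σ G ⊆ G.cf)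
    (hinter : ∀ (G : AF) (K : Set ℕ), SplitSet G K → ∀ S ∈ σ G, S ∩ K ∈ σ (restrictAF G K))
    (hunion : ∀ (G : AF) (K : Set ℕ), SplitSet G K →
      ∀ S₁ ∈ σ (restrictAF G K), ∀ S₂ ∈ σ (restrictAF G Kᶜ), S₁ ∪ S₂ ∈ σ G)
    (hempty : ∀ G : AF, G.R = ∅ → σ G = {(↑G.A : Set ℕ)})
    (hconn : ∀ (G : AF) (K : Set ℕ), (∀ p ∈ G.R, p.1 ∈ K ∧ p.2 ∈ K) →
      2 ≤ (σ (restrictAF G K)).ncard → σ (restrictAF G K) ⊆ σ (connectify G K))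
    (𝕊 : Set (Set ℕ)) (F : AF) (hcomp : AFCompact σ F) (hσF : σ F = 𝕊)
    (hprime : Nat.Prime 𝕊.ncard) :
    𝕊.ncard ≤ sigmaMaxCon σ (ArgS 𝕊).ncard := by
  subst hσF
  -- the arguments of the extension set are exactly the arguments of F
  have hArg : ArgS (σ F) = (↑F.A : Set ℕ) := by
    apply Set.Subset.antisymm
    · rintro x ⟨S, hS, hx⟩
      exact (hcf F hS).1 hx
    · intro x hx
      obtain ⟨S, hS, hxS⟩ := hcomp x hx
      exact ⟨S, hS, hxS⟩
  rw [hArg, Set.ncard_coe_finset]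
  -- R is nonempty
  rcases Set.eq_empty_or_nonempty F.R with hR | ⟨⟨a, b⟩, hab⟩
  · rw [hempty F hR, Set.ncard_singleton] at hprime
    exact absurd hprime Nat.not_prime_one
  have haA : a ∈ F.A := (F.R_sub _ hab).1
  have hbA : b ∈ F.A := (F.R_sub _ hab).2
  -- the connected component of a
  set K : Set ℕ := {x | x ∈ (↑F.A : Set ℕ) ∧ sameComp F a x} with hKdef
  have hsplit : SplitSet F K := by
    rintro ⟨x, y⟩ hxy
    have hx := F.R_sub _ hxy
    constructor
    · rintro ⟨-, hcx⟩
      exact ⟨hx.2, hcx.tail (Or.inl hxy)⟩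
    · rintro ⟨-, hcy⟩
      exact ⟨hx.1, hcy.tail (Or.inr hxy)⟩
  have haK : a ∈ K := ⟨haA, Relation.ReflTransGen.refl⟩
  have hbK : b ∈ K := (hsplit _ hab).mp haK
  have hbij := bij_of σ hcf hinter hunion F K hsplit
  -- traces of global extensions
  have htr1 : ∀ x ∈ F.A, x ∈ K → ∃ U ∈ σ (restrictAF F K), x ∈ U := by
    intro x hxA hxK
    obtain ⟨S, hS, hxS⟩ := hcomp x hxA
    exact ⟨S ∩ K, (Set.mem_prod.mp (hbij.mapsTo hS)).1, hxS, hxK⟩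
  have htr2 : ∀ x ∈ F.A, x ∉ K → ∃ U ∈ σ (restrictAF F Kᶜ), x ∈ U := by
    intro x hxA hxK
    obtain ⟨S, hS, hxS⟩ := hcomp x hxA
    exact ⟨S ∩ Kᶜ, (Set.mem_prod.mp (hbij.mapsTo hS)).2, hxS, hxK⟩
  -- the product formula
  have hfin1 : (σ (restrictAF F K)).Finite := sigma_finite (hcf _)
  have hfin2 : (σ (restrictAF F Kᶜ)).Finite := sigma_finite (hcf _)
  have hmul : (σ F).ncard = (σ (restrictAF F K)).ncard * (σ (restrictAF F Kᶜ)).ncard := by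
    rw [← ncard_prod_sets, ← hbij.image_eq, Set.ncard_image_of_injOn hbij.injOn]
  -- the K-side has more than one extension
  have h1ne : (σ (restrictAF F K)).ncard ≠ 1 := by
    intro hone
    obtain ⟨U, hU⟩ := Set.ncard_eq_one.mp hone
    obtain ⟨U₁, hU₁, haU⟩ := htr1 a haA haK
    obtain ⟨U₂, hU₂, hbU⟩ := htr1 b hbA hbK
    rw [hU, Set.mem_singleton_iff] at hU₁ hU₂
    rw [hU₁] at haU
    rw [hU₂] at hbU
    have hUcf : U ∈ (restrictAF F K).cf := hcf _ (by rw [hU]; exact rfl)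
    exact hUcf.2 a haU b hbU ⟨hab, haK, hbK⟩
  have hc1 : (σ (restrictAF F K)).ncard = (σ F).ncard := by
    rcases hprime.eq_one_or_self_of_dvd _ ⟨_, hmul⟩ with h | h
    · exact absurd h h1ne
    · exact h
  have hc2 : (σ (restrictAF F Kᶜ)).ncard = 1 := by
    have h2' : (σ F).ncard * (σ (restrictAF F Kᶜ)).ncard = (σ F).ncard * 1 := by
      rw [mul_one]
      calc (σ F).ncard * (σ (restrictAF F Kᶜ)).ncard
          = (σ (restrictAF F K)).ncard * (σ (restrictAF F Kᶜ)).ncard := by rw [hc1]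
        _ = (σ F).ncard := hmul.symm
    exact Nat.eq_of_mul_eq_mul_left hprime.pos h2'
  -- all attacks lie inside K
  obtain ⟨U, hU⟩ := Set.ncard_eq_one.mp hc2
  have hUcf : U ∈ (restrictAF F Kᶜ).cf := hcf _ (by rw [hU]; exact rfl)
  have hXiso : ∀ p ∈ F.R, p.1 ∈ K ∧ p.2 ∈ K := by
    rintro ⟨c, d⟩ hcd
    have hcA : c ∈ F.A := (F.R_sub _ hcd).1
    have hdA : d ∈ F.A := (F.R_sub _ hcd).2
    by_cases hcK : c ∈ K
    · exact ⟨hcK, (hsplit _ hcd).mp hcK⟩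
    · exfalso
      have hdK : d ∉ K := fun hc => hcK ((hsplit _ hcd).mpr hc)
      obtain ⟨U₁, hU₁, hcU⟩ := htr2 c hcA hcK
      obtain ⟨U₂, hU₂, hdU⟩ := htr2 d hdA hdK
      rw [hU, Set.mem_singleton_iff] at hU₁ hU₂
      rw [hU₁] at hcU
      rw [hU₂] at hdU
      exact hUcf.2 c hcU d hdU ⟨hcd, hcK, hdK⟩
  -- the connectified framework
  have hconn' : AFConnected (connectify F K) := by
    intro y hy z hz
    have hy' : y ∈ (↑F.A : Set ℕ) := hy
    have hz' : z ∈ (↑F.A : Set ℕ) := hz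
    rcases Set.eq_empty_or_nonempty ((↑F.A : Set ℕ) \ K) with hXe | ⟨x₀, hx₀⟩
    · -- every argument is in K
      have hAK : ∀ w, w ∈ (↑F.A : Set ℕ) → w ∈ K := by
        intro w hw
        by_contra hc
        rw [Set.eq_empty_iff_forall_notMem] at hXe
        exact hXe w ⟨hw, hc⟩
      have hmono : ∀ u v : ℕ, Relation.ReflTransGen (AFStep F) u v →
          Relation.ReflTransGen (AFStep (connectify F K)) u v := by
        intro u v huv
        refine Relation.ReflTransGen.mono ?_ u v huv
        intro s t hst
        exact hst.imp (fun h => Or.inl h) (fun h => Or.inl h)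
      have hsymm : Symmetric (AFStep (connectify F K)) := by
        intro u v huv
        exact huv.symm
      have hya : Relation.ReflTransGen (AFStep F) a y := (hAK y hy').2
      have hza : Relation.ReflTransGen (AFStep F) a z := (hAK z hz').2
      haveI : Std.Symm (AFStep (connectify F K)) := ⟨fun _ _ h => hsymm h⟩
      exact (Std.Symm.symm _ _ (hmono a y hya)).trans (hmono a z hza)
    · have h1 : AFStep (connectify F K) y x₀ := Or.inl (Or.inr ⟨hy', hx₀⟩)
      have h2 : AFStep (connectify F K) x₀ z := Or.inr (Or.inr ⟨hz', hx₀⟩)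
      exact Relation.ReflTransGen.head h1 (Relation.ReflTransGen.single h2)
  -- counting on the connectified framework
  have h2le : 2 ≤ (σ (restrictAF F K)).ncard := by
    rw [hc1]
    exact hprime.two_le
  have hσ1 : σ (restrictAF F K) ⊆ σ (connectify F K) := hconn F K hXiso h2le
  have hfin' : (σ (connectify F K)).Finite := sigma_finite (hcf _)
  have hk : (σ F).ncard ≤ (σ (connectify F K)).ncard := by
    rw [← hc1]
    exact Set.ncard_le_ncard hσ1 hfin'
  have hbdd : BddAbove {k | ∃ G : AF, G.A.card = F.A.card ∧ AFConnected G ∧ (σ G).ncard = k} := by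
    refine ⟨2 ^ F.A.card, ?_⟩
    rintro k ⟨G, hGA, -, rfl⟩
    calc (σ G).ncard ≤ 2 ^ G.A.card := ncard_sigma_le (hcf G)
      _ = 2 ^ F.A.card := by rw [hGA]
  have hmem : (σ (connectify F K)).ncard ∈
      {k | ∃ G : AF, G.A.card = F.A.card ∧ AFConnected G ∧ (σ G).ncard = k} :=
    ⟨connectify F K, rfl, hconn', rfl⟩
  exact hk.trans (le_csSup hbdd hmem)
theorem prime_extension_count_bound (σ : Semantics) (hσ : σ ∈ StandardSemantics)
    (𝕊 : Set (Set ℕ)) (hext : IsExtensionSet 𝕊)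
    (F : AF) (hcomp : AFCompact σ F) (hσF : σ F = 𝕊)
    (hprime : Nat.Prime 𝕊.ncard) :
    𝕊.ncard ≤ sigmaMaxCon σ (ArgS 𝕊).ncard := by
  have hcf_cf : ∀ G : AF, AF.cf G ⊆ G.cf := fun _ _ h => h
  have hcf_inter : ∀ (G : AF) (K : Set ℕ), SplitSet G K →
      ∀ S ∈ AF.cf G, S ∩ K ∈ AF.cf (restrictAF G K) := fun _ _ _ _ hS => cf_inter_s10 hS
  have hcf_union : ∀ (G : AF) (K : Set ℕ), SplitSet G K →
      ∀ S₁ ∈ AF.cf (restrictAF G K), ∀ S₂ ∈ AF.cf (restrictAF G Kᶜ), S₁ ∪ S₂ ∈ AF.cf G :=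
    fun _ _ h _ h₁ _ h₂ => cf_union_s10 h h₁ h₂
  have hadm_cf : ∀ G : AF, AF.adm G ⊆ G.cf := fun _ _ h => h.1
  have hadm_inter : ∀ (G : AF) (K : Set ℕ), SplitSet G K →
      ∀ S ∈ AF.adm G, S ∩ K ∈ AF.adm (restrictAF G K) := fun _ _ h _ hS => adm_inter_s10 h hS
  have hadm_union : ∀ (G : AF) (K : Set ℕ), SplitSet G K →
      ∀ S₁ ∈ AF.adm (restrictAF G K), ∀ S₂ ∈ AF.adm (restrictAF G Kᶜ), S₁ ∪ S₂ ∈ AF.adm G :=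
    fun _ _ h _ h₁ _ h₂ => adm_union_s10 h h₁ h₂
  have hσ' : σ = AF.naive ∨ σ = AF.stb ∨ σ = AF.stage ∨ σ = AF.pref ∨ σ = AF.sem := by
    simpa [StandardSemantics] using hσ
  rcases hσ' with rfl | rfl | rfl | rfl | rfl
  · exact main_aux AF.naive (fun _ _ hS => hS.1)
      (fun G K h => smax_inter hcf_cf hcf_inter hcf_union G K h)
      (fun G K h => smax_union hcf_cf hcf_inter hcf_union G K h)
      (fun _ hR => smax_empty hR rfl)
      (fun G K _ _ => smax_connectify G K (cf_connectify G K))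
      𝕊 F hcomp hσF hprime
  · exact main_aux AF.stb (fun G => stb_cf G)
      (fun G K h => stb_inter G K h)
      (fun G K h => stb_union G K h)
      (fun _ hR => stb_empty hR)
      (fun G K hK h2 => stb_connectify G K hK h2)
      𝕊 F hcomp hσF hprime
  · exact main_aux AF.stage (fun _ _ hS => hS.1)
      (fun G K h => rmax_inter hcf_cf hcf_inter hcf_union G K h)
      (fun G K h => rmax_union hcf_cf hcf_inter hcf_union G K h)
      (fun _ hR => rmax_empty hR rfl)
      (fun G K hK h2 => rmax_connectify hcf_cf G K hK (cf_connectify G K) h2)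
      𝕊 F hcomp hσF hprime
  · exact main_aux AF.pref (fun _ _ hS => hS.1.1)
      (fun G K h => smax_inter hadm_cf hadm_inter hadm_union G K h)
      (fun G K h => smax_union hadm_cf hadm_inter hadm_union G K h)
      (fun _ hR => smax_empty hR (adm_eq_cf_of_empty hR))
      (fun G K hK _ => smax_connectify G K (adm_connectify G K hK))
      𝕊 F hcomp hσF hprime
  · exact main_aux AF.sem (fun _ _ hS => hS.1.1)
      (fun G K h => rmax_inter hadm_cf hadm_inter hadm_union G K h)
      (fun G K h => rmax_union hadm_cf hadm_inter hadm_union G K h)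
      (fun _ hR => rmax_empty hR (adm_eq_cf_of_empty hR))
      (fun G K hK h2 => rmax_connectify hadm_cf G K hK (adm_connectify G K hK) h2)
      𝕊 F hcomp hσF hprime
end

section
/- Let σ ∈ {naive, stb, stage, pref, sem} and let 𝕊 be an extension-set realized by some σ-compact AF (σ(F) = 𝕊 for some σ-compact F). Then Ω(|𝕊|) ≥ |K_{≥2}(𝕊)|, where Ω(m) denotes the number of prime factors of m counted with multiplicity and K_{≥2}(𝕊) denotes the set of classes of K(𝕊) of size at least 2. -/
section OmegaHelpers

namespace OmegaAux

noncomputable local instance : DecidableEq (Set ℕ) := Classical.decEq _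

variable (𝕊 : Set (Set ℕ))

/-- The component (class) of `a` in the no-pairs graph. -/
def cls (a : ℕ) : Set ℕ := {b ∈ ArgS 𝕊 | Relation.ReflTransGen (nopairs 𝕊) a b}

lemma pairs_symm {a b : ℕ} (h : (a, b) ∈ PairsS 𝕊) : (b, a) ∈ PairsS 𝕊 := by
  obtain ⟨S, hS, h1, h2⟩ := h
  exact ⟨S, hS, h2, h1⟩

lemma nopairs_symm : Symmetric (nopairs 𝕊) := by
  rintro a b ⟨ha, hb, hp⟩
  exact ⟨hb, ha, fun h => hp (pairs_symm 𝕊 h)⟩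

lemma cls_sub (a : ℕ) : cls 𝕊 a ⊆ ArgS 𝕊 := fun _ hb => hb.1

lemma mem_cls_self {a : ℕ} (ha : a ∈ ArgS 𝕊) : a ∈ cls 𝕊 a := ⟨ha, .refl⟩

lemma cls_closed {a x y : ℕ} (hx : x ∈ cls 𝕊 a) (hy : y ∈ ArgS 𝕊)
    (hp : (x, y) ∉ PairsS 𝕊) : y ∈ cls 𝕊 a :=
  ⟨hy, hx.2.tail ⟨hx.1, hy, hp⟩⟩

lemma cls_eq_of_mem {a b : ℕ} (h : b ∈ cls 𝕊 a) : cls 𝕊 b = cls 𝕊 a := by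
  ext c
  constructor
  · rintro ⟨hc, hbc⟩
    exact ⟨hc, h.2.trans hbc⟩
  · rintro ⟨hc, hac⟩
    exact ⟨hc, ((haveI : Std.Symm (nopairs 𝕊) := ⟨fun _ _ h => nopairs_symm 𝕊 h⟩; Std.Symm.symm _ _ h.2).trans hac)⟩

lemma compsS_eq : compsS 𝕊 = {K | ∃ a ∈ ArgS 𝕊, K = cls 𝕊 a} := rfl

lemma comps_disjoint {K1 K2 : Set ℕ} (h1 : K1 ∈ compsS 𝕊) (h2 : K2 ∈ compsS 𝕊)
    (hne : K1 ≠ K2) : Disjoint K1 K2 := by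
  obtain ⟨a1, _, rfl⟩ := h1
  obtain ⟨a2, _, rfl⟩ := h2
  rw [Set.disjoint_left]
  intro x hx1 hx2
  exact hne ((cls_eq_of_mem 𝕊 hx1).symm.trans (cls_eq_of_mem 𝕊 hx2))

/-! ### Generic maximality mixing lemmas -/

lemma max_mix {𝒞 : Set (Set ℕ)} {K S T : Set ℕ}
    (hmixC : ∀ X ∈ 𝒞, ∀ Y ∈ 𝒞, (X \ K) ∪ (Y ∩ K) ∈ 𝒞)
    (hS : S ∈ 𝒞 ∧ ∀ T' ∈ 𝒞, S ⊆ T' → S = T')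
    (hT : T ∈ 𝒞 ∧ ∀ T' ∈ 𝒞, T ⊆ T' → T = T') :
    ((T \ K) ∪ (S ∩ K)) ∈ 𝒞 ∧
      ∀ T' ∈ 𝒞, (T \ K) ∪ (S ∩ K) ⊆ T' → (T \ K) ∪ (S ∩ K) = T' := by
  refine ⟨hmixC T hT.1 S hS.1, ?_⟩
  intro V hV hZV
  have hSK : S ∩ K ⊆ V := fun x hx => hZV (Or.inr hx)
  have hTK : T \ K ⊆ V := fun x hx => hZV (Or.inl hx)
  have hS'' := hmixC S hS.1 V hV
  have hSsub : S ⊆ (S \ K) ∪ (V ∩ K) := by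
    intro x hx
    by_cases hk : x ∈ K
    · exact Or.inr ⟨hSK ⟨hx, hk⟩, hk⟩
    · exact Or.inl ⟨hx, hk⟩
  have hSeq := hS.2 _ hS'' hSsub
  have hT'' := hmixC V hV T hT.1
  have hTsub : T ⊆ (V \ K) ∪ (T ∩ K) := by
    intro x hx
    by_cases hk : x ∈ K
    · exact Or.inr ⟨hx, hk⟩
    · exact Or.inl ⟨hTK ⟨hx, hk⟩, hk⟩
  have hTeq := hT.2 _ hT'' hTsub
  apply Set.Subset.antisymm hZV
  intro x hx
  by_cases hk : x ∈ K
  · have hxS : x ∈ S := by rw [hSeq]; exact Or.inr ⟨hx, hk⟩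
    exact Or.inr ⟨hxS, hk⟩
  · have hxT : x ∈ T := by rw [hTeq]; exact Or.inl ⟨hx, hk⟩
    exact Or.inl ⟨hxT, hk⟩

lemma rngmax_mix {𝒞 : Set (Set ℕ)} (rng : Set ℕ → Set ℕ) {K S T : Set ℕ}
    (hmixC : ∀ X ∈ 𝒞, ∀ Y ∈ 𝒞, (X \ K) ∪ (Y ∩ K) ∈ 𝒞)
    (hrI : ∀ X Y : Set ℕ, rng ((X \ K) ∪ (Y ∩ K)) ∩ K = rng Y ∩ K)
    (hrD : ∀ X Y : Set ℕ, rng ((X \ K) ∪ (Y ∩ K)) \ K = rng X \ K)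
    (hS : S ∈ 𝒞 ∧ ¬ ∃ T' ∈ 𝒞, rng S ⊂ rng T')
    (hT : T ∈ 𝒞 ∧ ¬ ∃ T' ∈ 𝒞, rng T ⊂ rng T') :
    ((T \ K) ∪ (S ∩ K)) ∈ 𝒞 ∧
      ¬ ∃ T' ∈ 𝒞, rng ((T \ K) ∪ (S ∩ K)) ⊂ rng T' := by
  refine ⟨hmixC T hT.1 S hS.1, ?_⟩
  rintro ⟨V, hV, hlt⟩
  obtain ⟨x, hxV, hxZ⟩ := Set.exists_of_ssubset hlt
  have hVsub : rng ((T \ K) ∪ (S ∩ K)) ⊆ rng V := hlt.1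
  by_cases hk : x ∈ K
  · apply hS.2
    refine ⟨(S \ K) ∪ (V ∩ K), hmixC S hS.1 V hV, ?_⟩
    rw [Set.ssubset_def]
    constructor
    · intro y hy
      by_cases hyk : y ∈ K
      · have h1 : y ∈ rng ((T \ K) ∪ (S ∩ K)) ∩ K := by rw [hrI]; exact ⟨hy, hyk⟩
        have h2 : y ∈ rng V := hVsub h1.1
        have h3 : y ∈ rng ((S \ K) ∪ (V ∩ K)) ∩ K := by rw [hrI]; exact ⟨h2, hyk⟩
        exact h3.1
      · have h3 : y ∈ rng ((S \ K) ∪ (V ∩ K)) \ K := by rw [hrD]; exact ⟨hy, hyk⟩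
        exact h3.1
    · intro hcon
      have hx'' : x ∈ rng ((S \ K) ∪ (V ∩ K)) := by
        have h3 : x ∈ rng ((S \ K) ∪ (V ∩ K)) ∩ K := by rw [hrI]; exact ⟨hxV, hk⟩
        exact h3.1
      have hxS : x ∈ rng S := hcon hx''
      have h4 : x ∈ rng ((T \ K) ∪ (S ∩ K)) ∩ K := by rw [hrI]; exact ⟨hxS, hk⟩
      exact hxZ h4.1
  · apply hT.2
    refine ⟨(V \ K) ∪ (T ∩ K), hmixC V hV T hT.1, ?_⟩
    rw [Set.ssubset_def]
    constructor
    · intro y hy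
      by_cases hyk : y ∈ K
      · have h3 : y ∈ rng ((V \ K) ∪ (T ∩ K)) ∩ K := by rw [hrI]; exact ⟨hy, hyk⟩
        exact h3.1
      · have h1 : y ∈ rng ((T \ K) ∪ (S ∩ K)) \ K := by rw [hrD]; exact ⟨hy, hyk⟩
        have h2 : y ∈ rng V := hVsub h1.1
        have h3 : y ∈ rng ((V \ K) ∪ (T ∩ K)) \ K := by rw [hrD]; exact ⟨h2, hyk⟩
        exact h3.1
    · intro hcon
      have hx'' : x ∈ rng ((V \ K) ∪ (T ∩ K)) := by
        have h3 : x ∈ rng ((V \ K) ∪ (T ∩ K)) \ K := by rw [hrD]; exact ⟨hxV, hk⟩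
        exact h3.1
      have hxT : x ∈ rng T := hcon hx''
      have h4 : x ∈ rng ((T \ K) ∪ (S ∩ K)) \ K := by rw [hrD]; exact ⟨hxT, hk⟩
      exact hxZ h4.1

/-! ### AF-specific mixing lemmas -/

variable {F : AF} {K : Set ℕ}

lemma noR_of_pairs (hcf : ∀ S ∈ 𝕊, S ∈ F.cf) {a b : ℕ}
    (h : (a, b) ∈ PairsS 𝕊) : (a, b) ∉ F.R := by
  obtain ⟨W, hW, ha, hb⟩ := h
  exact (hcf W hW).2 a ha b hb

lemma edge_mem (hcf : ∀ S ∈ 𝕊, S ∈ F.cf) (hAsub : (↑F.A : Set ℕ) ⊆ ArgS 𝕊)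
    (hKcl : ∀ x ∈ K, ∀ y ∈ ArgS 𝕊, (x, y) ∉ PairsS 𝕊 → y ∈ K)
    {x y : ℕ} (hR : (x, y) ∈ F.R) (hx : x ∈ K) : y ∈ K := by
  have hy : y ∈ ArgS 𝕊 := hAsub (F.R_sub _ hR).2
  exact hKcl x hx y hy (fun hp => noR_of_pairs 𝕊 hcf hp hR)

lemma edge_mem' (hcf : ∀ S ∈ 𝕊, S ∈ F.cf) (hAsub : (↑F.A : Set ℕ) ⊆ ArgS 𝕊)
    (hKcl : ∀ x ∈ K, ∀ y ∈ ArgS 𝕊, (x, y) ∉ PairsS 𝕊 → y ∈ K)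
    {x y : ℕ} (hR : (x, y) ∈ F.R) (hy : y ∈ K) : x ∈ K := by
  have hx : x ∈ ArgS 𝕊 := hAsub (F.R_sub _ hR).1
  exact hKcl y hy x hx (fun hp => noR_of_pairs 𝕊 hcf (pairs_symm 𝕊 hp) hR)

lemma cf_mix (hcf : ∀ S ∈ 𝕊, S ∈ F.cf) (hAsub : (↑F.A : Set ℕ) ⊆ ArgS 𝕊)
    (hKcl : ∀ x ∈ K, ∀ y ∈ ArgS 𝕊, (x, y) ∉ PairsS 𝕊 → y ∈ K)
    {X Y : Set ℕ} (hX : X ∈ F.cf) (hY : Y ∈ F.cf) :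
    (X \ K) ∪ (Y ∩ K) ∈ F.cf := by
  constructor
  · rintro x (hx | hx)
    · exact hX.1 hx.1
    · exact hY.1 hx.1
  · rintro a (ha | ha) b (hb | hb) hR
    · exact hX.2 a ha.1 b hb.1 hR
    · exact ha.2 (edge_mem' 𝕊 hcf hAsub hKcl hR hb.2)
    · exact hb.2 (edge_mem 𝕊 hcf hAsub hKcl hR ha.2)
    · exact hY.2 a ha.1 b hb.1 hR

lemma adm_mix (hcf : ∀ S ∈ 𝕊, S ∈ F.cf) (hAsub : (↑F.A : Set ℕ) ⊆ ArgS 𝕊)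
    (hKcl : ∀ x ∈ K, ∀ y ∈ ArgS 𝕊, (x, y) ∉ PairsS 𝕊 → y ∈ K)
    {X Y : Set ℕ} (hX : X ∈ F.adm) (hY : Y ∈ F.adm) :
    (X \ K) ∪ (Y ∩ K) ∈ F.adm := by
  refine ⟨cf_mix 𝕊 hcf hAsub hKcl hX.1 hY.1, ?_⟩
  rintro a (ha | ha) b hba
  · obtain ⟨s, hs, hsb⟩ := hX.2 a ha.1 b hba
    have hbK : b ∉ K := fun hbK => ha.2 (edge_mem 𝕊 hcf hAsub hKcl hba hbK)
    have hsK : s ∉ K := fun hsK => hbK (edge_mem 𝕊 hcf hAsub hKcl hsb hsK)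
    exact ⟨s, Or.inl ⟨hs, hsK⟩, hsb⟩
  · obtain ⟨s, hs, hsb⟩ := hY.2 a ha.1 b hba
    have hbK : b ∈ K := edge_mem' 𝕊 hcf hAsub hKcl hba ha.2
    have hsK : s ∈ K := edge_mem' 𝕊 hcf hAsub hKcl hsb hbK
    exact ⟨s, Or.inr ⟨hs, hsK⟩, hsb⟩

lemma rng_mix_inter (hcf : ∀ S ∈ 𝕊, S ∈ F.cf) (hAsub : (↑F.A : Set ℕ) ⊆ ArgS 𝕊)
    (hKcl : ∀ x ∈ K, ∀ y ∈ ArgS 𝕊, (x, y) ∉ PairsS 𝕊 → y ∈ K)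
    (X Y : Set ℕ) :
    F.rng ((X \ K) ∪ (Y ∩ K)) ∩ K = F.rng Y ∩ K := by
  ext b
  simp only [AF.rng, Set.mem_inter_iff, Set.mem_union, Set.mem_setOf_eq,
    Set.mem_diff]
  constructor
  · rintro ⟨h, hbK⟩
    refine ⟨?_, hbK⟩
    rcases h with (hb | hb) | ⟨s, hsZ, hsb⟩
    · exact absurd hbK hb.2
    · exact Or.inl hb.1
    · rcases hsZ with hs | hs
      · exact absurd (edge_mem' 𝕊 hcf hAsub hKcl hsb hbK) hs.2
      · exact Or.inr ⟨s, hs.1, hsb⟩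
  · rintro ⟨h, hbK⟩
    refine ⟨?_, hbK⟩
    rcases h with hb | ⟨s, hsY, hsb⟩
    · exact Or.inl (Or.inr ⟨hb, hbK⟩)
    · exact Or.inr ⟨s, Or.inr ⟨hsY, edge_mem' 𝕊 hcf hAsub hKcl hsb hbK⟩, hsb⟩

lemma rng_mix_diff (hcf : ∀ S ∈ 𝕊, S ∈ F.cf) (hAsub : (↑F.A : Set ℕ) ⊆ ArgS 𝕊)
    (hKcl : ∀ x ∈ K, ∀ y ∈ ArgS 𝕊, (x, y) ∉ PairsS 𝕊 → y ∈ K)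
    (X Y : Set ℕ) :
    F.rng ((X \ K) ∪ (Y ∩ K)) \ K = F.rng X \ K := by
  ext b
  simp only [AF.rng, Set.mem_union, Set.mem_setOf_eq, Set.mem_diff,
    Set.mem_inter_iff]
  constructor
  · rintro ⟨h, hbK⟩
    refine ⟨?_, hbK⟩
    rcases h with (hb | hb) | ⟨s, hsZ, hsb⟩
    · exact Or.inl hb.1
    · exact absurd hb.2 hbK
    · rcases hsZ with hs | hs
      · exact Or.inr ⟨s, hs.1, hsb⟩
      · exact absurd (edge_mem 𝕊 hcf hAsub hKcl hsb hs.2) hbK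
  · rintro ⟨h, hbK⟩
    refine ⟨?_, hbK⟩
    rcases h with hb | ⟨s, hsX, hsb⟩
    · exact Or.inl (Or.inl ⟨hb, fun hk => hbK hk⟩)
    · refine Or.inr ⟨s, Or.inl ⟨hsX, fun hk => hbK (edge_mem 𝕊 hcf hAsub hKcl hsb hk)⟩, hsb⟩

lemma stb_mix (hcf : ∀ S ∈ 𝕊, S ∈ F.cf) (hAsub : (↑F.A : Set ℕ) ⊆ ArgS 𝕊)
    (hKcl : ∀ x ∈ K, ∀ y ∈ ArgS 𝕊, (x, y) ∉ PairsS 𝕊 → y ∈ K)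
    {S T : Set ℕ} (hS : S ∈ F.stb) (hT : T ∈ F.stb) :
    (T \ K) ∪ (S ∩ K) ∈ F.stb := by
  refine ⟨cf_mix 𝕊 hcf hAsub hKcl hT.1 hS.1, ?_⟩
  intro a haA haZ
  by_cases hk : a ∈ K
  · have haS : a ∉ S := fun haS => haZ (Or.inr ⟨haS, hk⟩)
    obtain ⟨s, hs, hsa⟩ := hS.2 a haA haS
    exact ⟨s, Or.inr ⟨hs, edge_mem' 𝕊 hcf hAsub hKcl hsa hk⟩, hsa⟩
  · have haT : a ∉ T := fun haT => haZ (Or.inl ⟨haT, hk⟩)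
    obtain ⟨t, ht, hta⟩ := hT.2 a haA haT
    have htK : t ∉ K := fun htK => hk (edge_mem 𝕊 hcf hAsub hKcl hta htK)
    exact ⟨t, Or.inl ⟨ht, htK⟩, hta⟩

/-! ### Counting -/

/-- Traces of extensions on a union of components. -/
def Tr (s : Finset (Set ℕ)) : Set (Set ℕ) := (fun S => S ∩ ⋃₀ ↑s) '' 𝕊

lemma Tr_finite (hSfin : 𝕊.Finite) (s : Finset (Set ℕ)) : (Tr 𝕊 s).Finite :=
  hSfin.image _

lemma Tr_nonempty (hne : 𝕊.Nonempty) (s : Finset (Set ℕ)) : (Tr 𝕊 s).Nonempty :=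
  hne.image _

lemma Tr_step (hmix : ∀ a₀ : ℕ, ∀ S ∈ 𝕊, ∀ T ∈ 𝕊,
      (T \ cls 𝕊 a₀) ∪ (S ∩ cls 𝕊 a₀) ∈ 𝕊)
    {K : Set ℕ} (hK : K ∈ compsS 𝕊)
    {s : Finset (Set ℕ)} (hdisj : ∀ K' ∈ s, Disjoint K K') :
    (Tr 𝕊 (insert K s)).ncard = (Tr 𝕊 {K}).ncard * (Tr 𝕊 s).ncard := by
  set W : Set ℕ := ⋃₀ ↑s with hW
  have hUnion : (⋃₀ ↑(insert K s) : Set ℕ) = K ∪ W := by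
    rw [Finset.coe_insert, Set.sUnion_insert]
  have hsingle : (⋃₀ ↑({K} : Finset (Set ℕ)) : Set ℕ) = K := by simp
  have hd : Disjoint K W := by
    rw [hW, Set.disjoint_sUnion_right]
    intro K' hK'
    exact hdisj K' (by simpa using hK')
  have hdW : ∀ x ∈ W, x ∉ K := fun x hx hk => (Set.disjoint_left.mp hd) hk hx
  have hrec : ∀ U : Set ℕ, U ⊆ K ∪ W → U = (U ∩ K) ∪ (U ∩ W) := by
    intro U hsub
    ext x
    constructor
    · intro hx
      rcases hsub hx with h | h
      · exact Or.inl ⟨hx, h⟩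
      · exact Or.inr ⟨hx, h⟩
    · rintro (h | h)
      · exact h.1
      · exact h.1
  set f : Set ℕ → Set ℕ × Set ℕ := fun U => (U ∩ K, U ∩ W) with hf
  have hbij : Set.BijOn f (Tr 𝕊 (insert K s)) ((Tr 𝕊 {K}) ×ˢ (Tr 𝕊 s)) := by
    refine ⟨?_, ?_, ?_⟩
    · rintro U ⟨S, hS, rfl⟩
      constructor
      · refine ⟨S, hS, ?_⟩
        rw [hsingle, hUnion]
        ext x
        simp only [Set.mem_inter_iff, Set.mem_union, hf]
        tauto
      · refine ⟨S, hS, ?_⟩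
        simp only
        rw [hUnion]
        ext x
        simp only [Set.mem_inter_iff, Set.mem_union]
        constructor
        · intro hx
          exact ⟨⟨hx.1, Or.inr hx.2⟩, hx.2⟩
        · intro hx
          exact ⟨hx.1.1, hx.2⟩
    · rintro U ⟨S, hS, rfl⟩ U' ⟨S', hS', rfl⟩ heq
      have h1 : S ∩ ⋃₀ ↑(insert K s) ∩ K = S' ∩ ⋃₀ ↑(insert K s) ∩ K :=
        congrArg Prod.fst heq
      have h2 : S ∩ ⋃₀ ↑(insert K s) ∩ W = S' ∩ ⋃₀ ↑(insert K s) ∩ W :=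
        congrArg Prod.snd heq
      have hsub1 : S ∩ ⋃₀ ↑(insert K s) ⊆ K ∪ W := by
        rw [← hUnion]; exact Set.inter_subset_right
      have hsub2 : S' ∩ ⋃₀ ↑(insert K s) ⊆ K ∪ W := by
        rw [← hUnion]; exact Set.inter_subset_right
      show S ∩ ⋃₀ ↑(insert K s) = S' ∩ ⋃₀ ↑(insert K s)
      rw [hrec _ hsub1, hrec _ hsub2, h1, h2]
    · rintro ⟨V₁, V₂⟩ ⟨⟨S, hS, hV1⟩, ⟨T, hT, hV2⟩⟩
      obtain ⟨a, ha, hKa⟩ := hK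
      have hWm : (T \ K) ∪ (S ∩ K) ∈ 𝕊 := by
        rw [hKa]
        exact hmix a S hS T hT
      refine ⟨((T \ K) ∪ (S ∩ K)) ∩ ⋃₀ ↑(insert K s), ⟨_, hWm, rfl⟩, ?_⟩
      have hKsubU : K ⊆ ⋃₀ ↑(insert K s) := by
        rw [hUnion]; exact Set.subset_union_left
      have hWsubU : W ⊆ ⋃₀ ↑(insert K s) := by
        rw [hUnion]; exact Set.subset_union_right
      have e1 : ((T \ K) ∪ (S ∩ K)) ∩ ⋃₀ ↑(insert K s) ∩ K = S ∩ K := by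
        ext x
        simp only [Set.mem_inter_iff, Set.mem_union, Set.mem_diff]
        constructor
        · rintro ⟨⟨h1 | h1, _⟩, hk⟩
          · exact absurd hk h1.2
          · exact h1
        · intro hx
          exact ⟨⟨Or.inr hx, hKsubU hx.2⟩, hx.2⟩
      have e2 : ((T \ K) ∪ (S ∩ K)) ∩ ⋃₀ ↑(insert K s) ∩ W = T ∩ W := by
        ext x
        simp only [Set.mem_inter_iff, Set.mem_union, Set.mem_diff]
        constructor
        · rintro ⟨⟨h1 | h1, _⟩, hw⟩
          · exact ⟨h1.1, hw⟩
          · exact absurd h1.2 (hdW x hw)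
        · intro hx
          exact ⟨⟨Or.inl ⟨hx.1, hdW x hx.2⟩, hWsubU hx.2⟩, hx.2⟩
      have hV1' : V₁ = S ∩ ⋃₀ ↑({K} : Finset (Set ℕ)) := hV1.symm
      rw [hsingle] at hV1'
      have hV2' : V₂ = T ∩ W := hV2.symm
      show (((T \ K) ∪ (S ∩ K)) ∩ ⋃₀ ↑(insert K s) ∩ K,
            ((T \ K) ∪ (S ∩ K)) ∩ ⋃₀ ↑(insert K s) ∩ W) = (V₁, V₂)
      rw [e1, e2, hV1', hV2']
  have hinj := Set.ncard_image_of_injOn hbij.injOn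
  rw [hbij.image_eq] at hinj
  rw [← hinj]
  rw [← Nat.card_coe_set_eq, ← Nat.card_coe_set_eq, ← Nat.card_coe_set_eq,
    ← Nat.card_prod]
  exact Nat.card_congr (Equiv.Set.prod _ _)

lemma trace_two (hSfin : 𝕊.Finite) {K : Set ℕ} (hK : K ∈ compsS 𝕊)
    (h2 : 2 ≤ K.ncard) (hKfin : K.Finite) : 2 ≤ (Tr 𝕊 {K}).ncard := by
  have h2' : 1 < K.ncard := h2
  obtain ⟨a, b, haK, hbK, hab⟩ := (Set.one_lt_ncard_iff hKfin).mp h2'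
  obtain ⟨a₀, ha₀, hKa⟩ := hK
  have haK' : a ∈ cls 𝕊 a₀ := by rw [hKa] at haK; exact haK
  have hbK' : b ∈ cls 𝕊 a₀ := by rw [hKa] at hbK; exact hbK
  have hbmem : b ∈ cls 𝕊 a := by
    rw [cls_eq_of_mem 𝕊 haK']
    exact hbK'
  obtain hEq | ⟨c, hac, _⟩ := hbmem.2.cases_head
  · exact absurd hEq hab
  · obtain ⟨haArg, hcArg, hacP⟩ := hac
    have hcK : c ∈ K := by
      rw [hKa]
      exact cls_closed 𝕊 haK' hcArg hacP
    obtain ⟨S₁, hS₁, haS₁⟩ := haArg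
    obtain ⟨S₂, hS₂, hcS₂⟩ := hcArg
    have hsingle : (⋃₀ ↑({K} : Finset (Set ℕ)) : Set ℕ) = K := by simp
    have hU1 : S₁ ∩ K ∈ Tr 𝕊 {K} := ⟨S₁, hS₁, by rw [hsingle]⟩
    have hU2 : S₂ ∩ K ∈ Tr 𝕊 {K} := ⟨S₂, hS₂, by rw [hsingle]⟩
    have hne : S₁ ∩ K ≠ S₂ ∩ K := by
      intro hEq2
      have haS₂ : a ∈ S₂ := by
        have h' : a ∈ S₂ ∩ K := by rw [← hEq2]; exact ⟨haS₁, haK⟩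
        exact h'.1
      exact hacP ⟨S₂, hS₂, haS₂, hcS₂⟩
    exact (Set.one_lt_ncard_iff (Tr_finite 𝕊 hSfin {K})).mpr ⟨_, _, hU1, hU2, hne⟩

open Classical in
lemma count_lemma (hext : IsExtensionSet 𝕊)
    (hmix : ∀ a₀ : ℕ, ∀ S ∈ 𝕊, ∀ T ∈ 𝕊,
      (T \ cls 𝕊 a₀) ∪ (S ∩ cls 𝕊 a₀) ∈ 𝕊) :
    {C ∈ compsS 𝕊 | 2 ≤ C.ncard}.ncard ≤ (𝕊.ncard).primeFactorsList.length := by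
  have hSsub : ∀ S ∈ 𝕊, S ⊆ ArgS 𝕊 := fun S hS => Set.subset_sUnion_of_mem hS
  have hSfin : 𝕊.Finite :=
    Set.Finite.subset hext.finite_subsets (fun S hS => hSsub S hS)
  rcases Set.eq_empty_or_nonempty 𝕊 with rfl | hne
  · have hc : {C ∈ compsS (∅ : Set (Set ℕ)) | 2 ≤ C.ncard} = ∅ := by
      ext C
      simp [compsS, ArgS]
    rw [hc]
    simp
  have hcomps_fin : (compsS 𝕊).Finite := by
    apply hext.finite_subsets.subset
    rintro K ⟨a, _, rfl⟩
    exact cls_sub 𝕊 a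
  set P : Finset (Set ℕ) := hcomps_fin.toFinset with hP
  have hPmem : ∀ K, K ∈ P ↔ K ∈ compsS 𝕊 := fun K => Set.Finite.mem_toFinset _
  have key : ∀ s : Finset (Set ℕ), ↑s ⊆ compsS 𝕊 →
      (s.filter (fun K => 2 ≤ K.ncard)).card ≤
        ((Tr 𝕊 s).ncard).primeFactorsList.length := by
    intro s
    induction s using Finset.induction_on with
    | empty => simp
    | @insert K s hKs ih =>
      intro hsub
      have hKc : K ∈ compsS 𝕊 := hsub (by simp)
      have hsc : ↑s ⊆ compsS 𝕊 := by
        intro K' hK'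
        exact hsub (by simp [hK'])
      have hdisj : ∀ K' ∈ s, Disjoint K K' := fun K' hK' =>
        comps_disjoint 𝕊 hKc (hsc hK') (fun h => hKs (h ▸ hK'))
      have hstep := Tr_step 𝕊 hmix hKc hdisj
      have hTrs_pos : 0 < (Tr 𝕊 s).ncard :=
        (Set.ncard_pos (Tr_finite 𝕊 hSfin s)).mpr (Tr_nonempty 𝕊 hne s)
      have hcK_pos : 0 < (Tr 𝕊 {K}).ncard :=
        (Set.ncard_pos (Tr_finite 𝕊 hSfin {K})).mpr (Tr_nonempty 𝕊 hne {K})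
      have hΩ : ((Tr 𝕊 (insert K s)).ncard).primeFactorsList.length =
          ((Tr 𝕊 {K}).ncard).primeFactorsList.length +
            ((Tr 𝕊 s).ncard).primeFactorsList.length := by
        rw [hstep]
        rw [(Nat.perm_primeFactorsList_mul hcK_pos.ne' hTrs_pos.ne').length_eq]
        exact List.length_append
      rw [hΩ, Finset.filter_insert]
      by_cases h2 : 2 ≤ K.ncard
      · rw [if_pos h2, Finset.card_insert_of_notMem
          (fun h => hKs (Finset.mem_filter.mp h).1)]
        have hKfin : K.Finite := by
          obtain ⟨a, _, rfl⟩ := hKc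
          exact hext.subset (cls_sub 𝕊 a)
        have hcK2 : 2 ≤ (Tr 𝕊 {K}).ncard := trace_two 𝕊 hSfin hKc h2 hKfin
        have h1 : 1 ≤ ((Tr 𝕊 {K}).ncard).primeFactorsList.length := by
          have hne' : ((Tr 𝕊 {K}).ncard).primeFactorsList ≠ [] := by
            intro hnil
            have := (Nat.primeFactorsList_eq_nil _).mp hnil
            omega
          exact List.length_pos_iff.mpr hne'
        have := ih hsc
        omega
      · rw [if_neg h2]
        have := ih hsc
        omega
  have hPU : (⋃₀ ↑P : Set ℕ) = ArgS 𝕊 := by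
    apply Set.Subset.antisymm
    · rintro x ⟨K, hKP, hxK⟩
      have hKc : K ∈ compsS 𝕊 := (hPmem K).mp (by exact_mod_cast hKP)
      obtain ⟨a, _, rfl⟩ := hKc
      exact cls_sub 𝕊 a hxK
    · intro a ha
      exact ⟨cls 𝕊 a, by exact_mod_cast (hPmem _).mpr ⟨a, ha, rfl⟩,
        mem_cls_self 𝕊 ha⟩
  have hTrP : Tr 𝕊 P = 𝕊 := by
    ext U
    constructor
    · rintro ⟨S, hS, rfl⟩
      show S ∩ ⋃₀ ↑P ∈ 𝕊
      rw [hPU, Set.inter_eq_self_of_subset_left (hSsub S hS)]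
      exact hS
    · intro hU
      refine ⟨U, hU, ?_⟩
      show U ∩ ⋃₀ ↑P = U
      rw [hPU, Set.inter_eq_self_of_subset_left (hSsub U hU)]
  have hLHS : {C ∈ compsS 𝕊 | 2 ≤ C.ncard} =
      ↑(P.filter (fun K => 2 ≤ K.ncard)) := by
    ext C
    simp only [Set.mem_setOf_eq, Finset.coe_filter, hPmem]
  rw [hLHS, Set.ncard_coe_finset]
  have := key P (by intro K hK; exact (hPmem K).mp (by exact_mod_cast hK))
  rwa [hTrP] at this

end OmegaAux

end OmegaHelpers

theorem omega_ge_nontrivial_components (σ : Semantics)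
    (hσ : σ ∈ StandardSemantics) (𝕊 : Set (Set ℕ)) (hext : IsExtensionSet 𝕊)
    (F : AF) (hcomp : AFCompact σ F) (hσF : σ F = 𝕊) :
    {C ∈ compsS 𝕊 | 2 ≤ C.ncard}.ncard ≤ (𝕊.ncard).primeFactorsList.length := by
  subst hσF
  have hAsub : (↑F.A : Set ℕ) ⊆ ArgS (σ F) := by
    intro a ha
    obtain ⟨S, hS, haS⟩ := hcomp a (by exact_mod_cast ha)
    exact ⟨S, hS, haS⟩
  have hKcl : ∀ a₀ : ℕ, ∀ x ∈ OmegaAux.cls (σ F) a₀, ∀ y ∈ ArgS (σ F),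
      (x, y) ∉ PairsS (σ F) → y ∈ OmegaAux.cls (σ F) a₀ :=
    fun a₀ x hx y hy hp => OmegaAux.cls_closed (σ F) hx hy hp
  simp only [StandardSemantics, Set.mem_insert_iff, Set.mem_singleton_iff] at hσ
  rcases hσ with rfl | rfl | rfl | rfl | rfl
  · -- naive
    have hcf : ∀ S ∈ F.naive, S ∈ F.cf := fun S hS => hS.1
    exact OmegaAux.count_lemma _ hext (fun a₀ S hS T hT =>
      OmegaAux.max_mix
        (fun X hX Y hY => OmegaAux.cf_mix _ hcf hAsub (hKcl a₀) hX hY) hS hT)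
  · -- stb
    have hcf : ∀ S ∈ F.stb, S ∈ F.cf := fun S hS => hS.1
    exact OmegaAux.count_lemma _ hext (fun a₀ S hS T hT =>
      OmegaAux.stb_mix _ hcf hAsub (hKcl a₀) hS hT)
  · -- stage
    have hcf : ∀ S ∈ F.stage, S ∈ F.cf := fun S hS => hS.1
    exact OmegaAux.count_lemma _ hext (fun a₀ S hS T hT =>
      OmegaAux.rngmax_mix F.rng
        (fun X hX Y hY => OmegaAux.cf_mix _ hcf hAsub (hKcl a₀) hX hY)
        (OmegaAux.rng_mix_inter _ hcf hAsub (hKcl a₀))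
        (OmegaAux.rng_mix_diff _ hcf hAsub (hKcl a₀)) hS hT)
  · -- pref
    have hcf : ∀ S ∈ F.pref, S ∈ F.cf := fun S hS => hS.1.1
    exact OmegaAux.count_lemma _ hext (fun a₀ S hS T hT =>
      OmegaAux.max_mix
        (fun X hX Y hY => OmegaAux.adm_mix _ hcf hAsub (hKcl a₀) hX hY) hS hT)
  · -- sem
    have hcf : ∀ S ∈ F.sem, S ∈ F.cf := fun S hS => hS.1.1
    exact OmegaAux.count_lemma _ hext (fun a₀ S hS T hT =>
      OmegaAux.rngmax_mix F.rng
        (fun X hX Y hY => OmegaAux.adm_mix _ hcf hAsub (hKcl a₀) hX hY)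
        (OmegaAux.rng_mix_inter _ hcf hAsub (hKcl a₀))
        (OmegaAux.rng_mix_diff _ hcf hAsub (hKcl a₀)) hS hT)
end

section
/- Assume the explicit-conflict conjecture: for every AF F = (A,R) there exists R' ⊆ A × A such that F' = (A,R') is conflict-explicit under stable semantics and stb(F') = stb(F). Then the c-signature of stable semantics is exactly Σ^c_stb = {𝕊 an extension-set | 𝕊 ⊆ 𝕊⁺ and 𝕊 is independent}. -/
lemma pairsS_symm {𝕊 : Set (Set ℕ)} {a b : ℕ} (h : (a, b) ∈ PairsS 𝕊) :
    (b, a) ∈ PairsS 𝕊 := by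
  obtain ⟨S, hS, h1, h2⟩ := h; exact ⟨S, hS, h2, h1⟩

lemma argS_stb_subset (F : AF) : ArgS (AF.stb F) ⊆ ↑F.A := by
  rintro a ⟨S, hS, haS⟩; exact hS.1.1 haS

lemma pairs_not_R {F : AF} {a b : ℕ} (h : (a, b) ∈ PairsS (AF.stb F)) : (a, b) ∉ F.R := by
  obtain ⟨S, hS, h1, h2⟩ := h; exact hS.1.2 a h1 b h2

lemma stb_mem_plus {F : AF} {S : Set ℕ} (hS : S ∈ AF.stb F) : S ∈ plusSet (AF.stb F) := by
  refine ⟨⟨fun a ha => ⟨S, hS, ha⟩, fun a ha b hb => ⟨S, hS, ha, hb⟩⟩, ?_⟩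
  intro T hT hsub
  apply subset_antisymm hsub
  intro t htT
  by_contra htS
  have htA : t ∈ F.A := Finset.mem_coe.mp (argS_stb_subset F (hT.1 htT))
  obtain ⟨s, hsS, hR⟩ := hS.2 t htA htS
  exact pairs_not_R (hT.2 s (hsub hsS) t htT) hR

theorem stb_c_signature_under_EC
    (EC : ∀ F : AF, ∃ F' : AF, F'.A = F.A ∧
      ConflictExplicit AF.stb F' ∧ AF.stb F' = AF.stb F) :
    cSig AF.stb = {𝕊 | IsExtensionSet 𝕊 ∧ 𝕊 ⊆ plusSet 𝕊 ∧ Independent 𝕊} := by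
  classical
  ext 𝕊
  constructor
  · rintro ⟨F, hcomp, rfl⟩
    refine ⟨(F.A.finite_toSet).subset (argS_stb_subset F), fun S hS => stb_mem_plus hS, ?_⟩
    -- Independence, using the explicit-conflict conjecture
    obtain ⟨F', hA, hce, hstb⟩ := EC F
    have hArgA : ArgS (AF.stb F) = ↑F.A := by
      apply subset_antisymm (argS_stb_subset F)
      intro a ha
      obtain ⟨S, hS, haS⟩ := hcomp a (Finset.mem_coe.mp ha)
      exact ⟨S, hS, haS⟩
    set P : Set ℕ → ℕ → Prop :=
      fun S a => a ∈ F'.A ∧ a ∉ S ∧ ∀ s ∈ S, (s, a) ∉ F'.R with hP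
    have hex : ∀ S ∈ minusSet (AF.stb F), ∃ a, P S a := by
      intro S hSm
      have hScf : S ∈ F'.cf := by
        refine ⟨?_, ?_⟩
        · intro a haS
          have : a ∈ (↑F.A : Set ℕ) := hArgA ▸ hSm.1.1.1 haS
          rw [hA]; exact this
        · intro a haS b hbS
          have hp : (a, b) ∈ PairsS (AF.stb F') := by
            rw [hstb]; exact hSm.1.1.2 a haS b hbS
          exact pairs_not_R hp
      have hnot : S ∉ AF.stb F' := by rw [hstb]; exact hSm.2
      by_contra hcon
      push_neg at hcon
      apply hnot
      refine ⟨hScf, ?_⟩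
      intro a haA haS
      by_contra hno
      push_neg at hno
      exact hcon a ⟨haA, haS, hno⟩
    set f : Set ℕ → ℕ := fun S => if h : ∃ a, P S a then h.choose else 0 with hfdef
    have hfP : ∀ S ∈ minusSet (AF.stb F), P S (f S) := by
      intro S hSm
      have h := hex S hSm
      simp only [hfdef, dif_pos h]
      exact h.choose_spec
    have hmemA : ∀ a ∈ ArgS (AF.stb F), a ∈ F'.A := by
      intro a ha
      rw [hA]
      exact Finset.mem_coe.mp (hArgA ▸ ha)
    have hfA : ∀ a ∈ (F'.A : Finset ℕ), a ∈ ArgS (AF.stb F) := by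
      intro a ha
      rw [hArgA]
      exact Finset.mem_coe.mpr (hA ▸ ha)
    refine ⟨{p | ∃ S ∈ minusSet (AF.stb F), p.1 ∈ S ∧ p.2 = f S ∧ p ∉ PairsS (AF.stb F)},
      ⟨f, fun S hSm => ⟨hfA _ (hfP S hSm).1, (hfP S hSm).2.1⟩, rfl⟩, ?_, ?_⟩
    · -- antisymmetry
      rintro a b ⟨S, hSm, haS, hbf, hnp⟩ ⟨T, hTm, hbT, haf, hnp'⟩
      exfalso
      have hbf' : b = f S := hbf
      have haf' : a = f T := haf
      have haA : a ∈ F'.A := hmemA a (hSm.1.1.1 haS)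
      have hbA : b ∈ F'.A := hbf' ▸ (hfP S hSm).1
      have hnR : (a, b) ∉ F'.R := hbf' ▸ (hfP S hSm).2.2 a haS
      have hnR' : (b, a) ∉ F'.R := haf' ▸ (hfP T hTm).2.2 b hbT
      have hnpair : (a, b) ∉ PairsS (AF.stb F') := by rw [hstb]; exact hnp
      rcases hce a haA b hbA hnpair with h | h
      · exact hnR h
      · exact hnR' h
    · -- independence condition
      intro S hS a ha
      obtain ⟨haArg, haS⟩ := ha
      have haA : a ∈ F'.A := hmemA a haArg
      have hS' : S ∈ AF.stb F' := by rw [hstb]; exact hS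
      obtain ⟨s, hsS, hR⟩ := hS'.2 a haA haS
      refine ⟨s, hsS, ?_⟩
      rintro (hRm | hPair)
      · obtain ⟨T, hTm, hsT, haf, _⟩ := hRm
        have haf' : a = f T := haf
        exact (haf' ▸ (hfP T hTm).2.2) s hsT hR
      · have : (s, a) ∈ PairsS (AF.stb F') := by rw [hstb]; exact hPair
        exact pairs_not_R this hR
  · rintro ⟨hfin, hplus, Rm, ⟨f, hf, hRmdef⟩, hanti, hind⟩
    set F : AF :=
      { A := hfin.toFinset
        R := {p | p.1 ∈ ArgS 𝕊 ∧ p.2 ∈ ArgS 𝕊 ∧ p ∉ PairsS 𝕊 ∧ p ∉ Rm}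
        R_sub := fun p hp => by
          exact ⟨(Set.Finite.mem_toFinset (hs := hfin)).2 hp.1, (Set.Finite.mem_toFinset (hs := hfin)).2 hp.2.1⟩ } with hF
    have hAeq : (↑F.A : Set ℕ) = ArgS 𝕊 := by
      simp only [hF, Set.Finite.coe_toFinset]
      exact Set.Finite.coe_toFinset (hs := hfin)
    have hstbF : AF.stb F = 𝕊 := by
      ext S
      constructor
      · intro hS
        have hScf : S ∈ cfSet 𝕊 := by
          refine ⟨hAeq ▸ hS.1.1, ?_⟩
          intro a haS b hbS
          by_contra hnp
          have haArg : a ∈ ArgS 𝕊 := (hAeq ▸ hS.1.1) haS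
          have hbArg : b ∈ ArgS 𝕊 := (hAeq ▸ hS.1.1) hbS
          have hnp' : (b, a) ∉ PairsS 𝕊 := fun h => hnp (pairsS_symm h)
          have hab : (a, b) ∈ Rm := by
            by_contra hR
            exact hS.1.2 a haS b hbS ⟨haArg, hbArg, hnp, hR⟩
          have hba : (b, a) ∈ Rm := by
            by_contra hR
            exact hS.1.2 b hbS a haS ⟨hbArg, haArg, hnp', hR⟩
          have : a = b := hanti a b hab hba
          subst this
          obtain ⟨T, hT, haT⟩ := haArg
          exact hnp ⟨T, hT, haT, haT⟩
        have hSplus : S ∈ plusSet 𝕊 := by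
          refine ⟨hScf, ?_⟩
          intro T hT hsub
          apply subset_antisymm hsub
          intro t htT
          by_contra htS
          have htA : t ∈ F.A := by
            rw [← Finset.mem_coe, hAeq]; exact hT.1 htT
          obtain ⟨s, hsS, hR⟩ := hS.2 t htA htS
          exact hR.2.2.1 (hT.2 s (hsub hsS) t htT)
        by_contra hSnot
        have hSm : S ∈ minusSet 𝕊 := ⟨hSplus, hSnot⟩
        obtain ⟨hfArg, hfS⟩ := hf S hSm
        have hfA : f S ∈ F.A := by rw [← Finset.mem_coe, hAeq]; exact hfArg
        obtain ⟨s, hsS, hR⟩ := hS.2 (f S) hfA hfS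
        have : (s, f S) ∈ Rm := by
          rw [hRmdef]
          exact ⟨S, hSm, hsS, rfl, hR.2.2.1⟩
        exact hR.2.2.2 this
      · intro hS
        have hSp := hplus hS
        refine ⟨⟨hAeq ▸ hSp.1.1, ?_⟩, ?_⟩
        · intro a haS b hbS hR
          exact hR.2.2.1 (hSp.1.2 a haS b hbS)
        · intro a haA haS
          have haArg : a ∈ ArgS 𝕊 := by rw [← hAeq]; exact Finset.mem_coe.mpr haA
          obtain ⟨s, hsS, hno⟩ := hind S hS a ⟨haArg, haS⟩
          refine ⟨s, hsS, ?_⟩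
          have hsArg : s ∈ ArgS 𝕊 := hSp.1.1 hsS
          have hnp : (s, a) ∉ PairsS 𝕊 := fun h => hno (Or.inr h)
          have hnRm : (s, a) ∉ Rm := fun h => hno (Or.inl h)
          exact ⟨hsArg, haArg, hnp, hnRm⟩
    refine ⟨F, ?_, hstbF⟩
    intro a haA
    have : a ∈ ArgS 𝕊 := by rw [← hAeq]; exact Finset.mem_coe.mpr haA
    obtain ⟨S, hS, haS⟩ := this
    exact ⟨S, hstbF ▸ hS, haS⟩
end
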